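/- arXiv:2209.14618 — 3 statements merged into one kernel-verified Lean document; each statement's English description precedes it below -/
import Mathlib

section
/- Suppose f : [0,∞)^d → [0,∞) is such that for every r > 0 the function z ↦ F(z,r) on ℕ^d is finite and not constant, and for every z ∈ ℕ^d and every r > 0 one has Σ_{i=1}^d z_i (F(z,r) − F(z−δ_i,r)) + Σ_{i=1}^d (z_i + 1/2)(F(z,r) − F(z+δ_i,r)) ≥ 0. Then for every λ ∈ (0,∞)^d, the Kullback–Leibler estimation risk of the Bayes estimator λ̂^{f}(x) = ((x_i + 1/2)/r · F(x+δ_i,r)/F(x,r))_{i=1,…,d} is strictly smaller than the Kullback–Leibler estimation risk of the Jeffreys Bayes estimator λ̂^{J}(x) = ((x_i + 1/2)/r)_{i=1,…,d}. -/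
open MeasureTheory Real Filter

noncomputable section

/-- The positive orthant `(0,∞)^d`. -/
def posOrthant (d : ℕ) : Set (Fin d → ℝ) := {lam | ∀ i, 0 < lam i}

/-- Poisson probability mass function with mean `μ`. -/
noncomputable def poissonPMF (μ : ℝ) (k : ℕ) : ℝ :=
  Real.exp (-μ) * μ ^ k / (Nat.factorial k)

/-- Kullback–Leibler estimation risk of an estimator `est` at parameter `lam`. -/
noncomputable def estRisk {d : ℕ} (r : ℝ) (lam : Fin d → ℝ)
    (est : (Fin d → ℕ) → Fin d → ℝ) : ℝ :=
  ∑' x : Fin d → ℕ,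
    (∑ i, (r * lam i * Real.log (lam i / est x i) - r * lam i + r * est x i)) *
      ∏ i, poissonPMF (r * lam i) (x i)

/-- The integrand of `F(z,r)` in the Jeffreys case (β_i = 1/2). -/
noncomputable def FintegrandJ {d : ℕ} (f : (Fin d → ℝ) → ℝ)
    (z : Fin d → ℕ) (r : ℝ) (lam : Fin d → ℝ) : ℝ :=
  f (fun i => Real.sqrt (lam i)) *
    ∏ i, r ^ ((z i : ℝ) + 1/2) * lam i ^ ((z i : ℝ) - 1/2) * Real.exp (-(r * lam i)) /
      Real.Gamma ((z i : ℝ) + 1/2)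

/-- `F(z,r) = ∫ f(√λ) ∏ r^{z_i+1/2} λ_i^{z_i-1/2} e^{-rλ_i}/Γ(z_i+1/2) dλ`. -/
noncomputable def FfunJ {d : ℕ} (f : (Fin d → ℝ) → ℝ)
    (z : Fin d → ℕ) (r : ℝ) : ℝ :=
  ∫ lam in posOrthant d, FintegrandJ f z r lam

/-- `F(z - δ_i, r)` with the convention that it equals `1` when `z i = 0`. -/
noncomputable def FfunJDown {d : ℕ} (f : (Fin d → ℝ) → ℝ)
    (z : Fin d → ℕ) (r : ℝ) (i : Fin d) : ℝ :=
  if z i = 0 then 1 else FfunJ f (Function.update z i (z i - 1)) r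



/-! ### KL pointwise inequalities -/

lemma kl_nonneg {a b : ℝ} (ha : 0 < a) (hb : 0 < b) :
    0 ≤ a * Real.log (a / b) - a + b := by
  have h := Real.log_le_sub_one_of_pos (x := b / a) (by positivity)
  have hlog : Real.log (a / b) = - Real.log (b / a) := by
    rw [← Real.log_inv]; congr 1; field_simp
  rw [hlog]
  have h2 := mul_le_mul_of_nonneg_left h ha.le
  have hba : a * (b / a - 1) = b - a := by field_simp
  nlinarith

lemma kl_pos {a b : ℝ} (ha : 0 < a) (hb : 0 < b) (hne : a ≠ b) :
    0 < a * Real.log (a / b) - a + b := by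
  have h := Real.log_lt_sub_one_of_pos (x := b / a) (by positivity)
    (by intro hh; apply hne; field_simp at hh; linarith)
  have hlog : Real.log (a / b) = - Real.log (b / a) := by
    rw [← Real.log_inv]; congr 1; field_simp
  rw [hlog]
  have h2 := mul_lt_mul_of_pos_left h ha
  have hba : a * (b / a - 1) = b - a := by field_simp
  nlinarith

lemma log_ge_one_sub_inv {t : ℝ} (ht : 0 < t) : 1 - 1/t ≤ Real.log t := by
  have h := Real.log_le_sub_one_of_pos (x := 1/t) (by positivity)
  rw [Real.log_div one_ne_zero ht.ne', Real.log_one] at h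
  linarith

lemma log_gt_one_sub_inv {t : ℝ} (ht : 0 < t) (hne : t ≠ 1) : 1 - 1/t < Real.log t := by
  have h := Real.log_lt_sub_one_of_pos (x := 1/t) (by positivity)
    (by intro hh; apply hne; field_simp at hh; linarith)
  rw [Real.log_div one_ne_zero ht.ne', Real.log_one] at h
  linarith

/-! ### Poisson pmf lemmas -/

lemma poissonPMF_pos {μ : ℝ} (hμ : 0 < μ) (k : ℕ) : 0 < poissonPMF μ k := by
  unfold poissonPMF; positivity

lemma summable_poissonPMF (μ : ℝ) : Summable (poissonPMF μ) := by
  have := (Real.summable_pow_div_factorial μ).mul_left (Real.exp (-μ))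
  refine this.congr fun k => ?_
  unfold poissonPMF; ring

lemma summable_nat_mul_poissonPMF {μ : ℝ} (hμ : 0 < μ) :
    Summable (fun k : ℕ => (k : ℝ) * poissonPMF μ k) := by
  have h2 : Summable (fun k : ℕ => Real.exp (-μ) * ((2*μ) ^ k / (Nat.factorial k))) :=
    (Real.summable_pow_div_factorial (2*μ)).mul_left _
  refine Summable.of_nonneg_of_le (fun k : ℕ => ?_) (fun k : ℕ => ?_) h2
  · have := poissonPMF_pos hμ k; positivity
  · unfold poissonPMF
    rw [div_eq_mul_inv, div_eq_mul_inv]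
    have hk : (k : ℝ) ≤ 2 ^ k := by exact_mod_cast k.lt_two_pow_self.le
    have hmono : (k:ℝ) * μ ^ k ≤ (2*μ)^k := by
      rw [mul_pow]
      exact mul_le_mul_of_nonneg_right hk (by positivity)
    have hfac : (0:ℝ) ≤ ((Nat.factorial k : ℝ))⁻¹ := by positivity
    have he : (0:ℝ) ≤ Real.exp (-μ) := (Real.exp_pos _).le
    calc (k:ℝ) * (Real.exp (-μ) * μ ^ k * (Nat.factorial k :ℝ)⁻¹)
        = Real.exp (-μ) * (((k:ℝ) * μ ^ k) * (Nat.factorial k : ℝ)⁻¹) := by ring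
      _ ≤ Real.exp (-μ) * ((2*μ)^k * (Nat.factorial k:ℝ)⁻¹) :=
          mul_le_mul_of_nonneg_left (mul_le_mul_of_nonneg_right hmono hfac) he

/-! ### Summability on pi types -/

lemma summable_pi_prod : ∀ {d : ℕ} (q : Fin d → ℕ → ℝ), (∀ i, Summable (q i)) →
    (∀ i k, 0 ≤ q i k) → Summable (fun x : Fin d → ℕ => ∏ i, q i (x i)) := by
  intro d
  induction d with
  | zero => intro q _ _; exact Summable.of_finite
  | succ n ih =>
    intro q hq hq0
    have hA : Summable (q 0) := hq 0
    have hB : Summable (fun y : Fin n → ℕ => ∏ i : Fin n, q i.succ (y i)) :=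
      ih (fun i => q i.succ) (fun i => hq i.succ) (fun i k => hq0 i.succ k)
    have h1 : Summable (fun p : ℕ × (Fin n → ℕ) =>
        q 0 p.1 * ∏ i : Fin n, q i.succ (p.2 i)) := by
      refine Summable.mul_of_nonneg (f := q 0)
        (g := fun y : Fin n → ℕ => ∏ i : Fin n, q i.succ (y i)) hA hB (fun k => hq0 0 k) ?_
      intro y
      exact Finset.prod_nonneg fun i _ => hq0 i.succ (y i)
    apply (Equiv.summable_iff (Fin.consEquiv (fun _ : Fin (n+1) => ℕ))).mp
    refine h1.congr fun p => ?_
    show q 0 p.1 * ∏ i : Fin n, q i.succ (p.2 i)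
        = ∏ i : Fin (n+1), q i ((Fin.cons p.1 p.2 : ∀ _ : Fin (n+1), ℕ) i)
    rw [Fin.prod_univ_succ]
    simp

/-! ### Poisson product lemmas -/

section PP
variable {d : ℕ} (r : ℝ) (lam : Fin d → ℝ)

def pp (x : Fin d → ℕ) : ℝ := ∏ i, poissonPMF (r * lam i) (x i)

variable (hr : 0 < r) (hlam : ∀ i, 0 < lam i)
include hr hlam

lemma pp_pos (x : Fin d → ℕ) : 0 < pp r lam x :=
  Finset.prod_pos fun i _ => poissonPMF_pos (by have := hlam i; positivity) (x i)

lemma summable_pp : Summable (pp r lam) :=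
  summable_pi_prod _ (fun i => summable_poissonPMF _)
    (fun i k => (poissonPMF_pos (by have := hlam i; positivity) k).le)

lemma summable_coord_mul_pp (j : Fin d) :
    Summable (fun x : Fin d → ℕ => (x j : ℝ) * pp r lam x) := by
  have h := summable_pi_prod
    (fun i k => (if i = j then (k : ℝ) else 1) * poissonPMF (r * lam i) k)
    (fun i => by
      by_cases hij : i = j
      · simp only [hij, if_pos rfl]
        exact summable_nat_mul_poissonPMF (by have := hlam j; positivity)
      · simp only [if_neg hij, one_mul]
        exact summable_poissonPMF _)
    (fun i k => mul_nonneg (by split <;> positivity)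
      (poissonPMF_pos (μ := r * lam i) (by have := hlam i; positivity) k).le)
  refine h.congr fun x => ?_
  rw [Finset.prod_mul_distrib]
  unfold pp
  congr 1
  simp [Finset.prod_ite_eq' Finset.univ j (fun i => ((x i : ℝ)))]

omit hr hlam in
lemma poissonPMF_step (μ : ℝ) (k : ℕ) :
    ((k : ℝ) + 1) * poissonPMF μ (k + 1) = μ * poissonPMF μ k := by
  unfold poissonPMF
  rw [Nat.factorial_succ, pow_succ]
  push_cast
  have h1 : ((k:ℝ) + 1) ≠ 0 := by positivity
  have h2 : ((Nat.factorial k : ℝ)) ≠ 0 := by positivity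
  field_simp

lemma pp_shift (x : Fin d → ℕ) (j : Fin d) :
    ((x j : ℝ) + 1) * pp r lam (Function.update x j (x j + 1)) = r * lam j * pp r lam x := by
  unfold pp
  rw [← Finset.mul_prod_erase Finset.univ _ (Finset.mem_univ j),
      ← Finset.mul_prod_erase Finset.univ
        (fun i => poissonPMF (r * lam i) (x i)) (Finset.mem_univ j)]
  have hoff : ∏ i ∈ Finset.univ.erase j,
      poissonPMF (r * lam i) (Function.update x j (x j + 1) i)
      = ∏ i ∈ Finset.univ.erase j, poissonPMF (r * lam i) (x i) := by
    refine Finset.prod_congr rfl fun i hi => ?_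
    rw [Function.update_of_ne (Finset.ne_of_mem_erase hi)]
  rw [hoff, Function.update_self, ← mul_assoc, poissonPMF_step, mul_assoc]

end PP

/-! ### Positivity of F and nonconstancy -/

lemma measurableSet_posOrthant (d : ℕ) : MeasurableSet (posOrthant d) := by
  have : posOrthant d = ⋂ i, {lam : Fin d → ℝ | 0 < lam i} := by
    ext; simp [posOrthant]
  rw [this]
  exact MeasurableSet.iInter fun i =>
    measurableSet_lt measurable_const (measurable_pi_apply i)

lemma Fweight_pos {d : ℕ} {r : ℝ} (hr : 0 < r) (z : Fin d → ℕ) {lam : Fin d → ℝ}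
    (hl : lam ∈ posOrthant d) :
    0 < ∏ i, r ^ ((z i : ℝ) + 1/2) * lam i ^ ((z i : ℝ) - 1/2) * Real.exp (-(r * lam i)) /
      Real.Gamma ((z i : ℝ) + 1/2) := by
  refine Finset.prod_pos fun i _ => ?_
  have h1 : (0:ℝ) < r ^ ((z i : ℝ) + 1/2) := Real.rpow_pos_of_pos hr _
  have h2 : (0:ℝ) < lam i ^ ((z i : ℝ) - 1/2) := Real.rpow_pos_of_pos (hl i) _
  have h3 := Real.exp_pos (-(r * lam i))
  have h4 : (0:ℝ) < Real.Gamma ((z i : ℝ) + 1/2) :=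
    Real.Gamma_pos_of_pos (by positivity)
  positivity

lemma FfunJ_nonneg {d : ℕ} (f : (Fin d → ℝ) → ℝ) (hf : ∀ θ, 0 ≤ f θ)
    {r : ℝ} (hr : 0 < r) (z : Fin d → ℕ) : 0 ≤ FfunJ f z r := by
  refine MeasureTheory.setIntegral_nonneg (measurableSet_posOrthant d) fun lam hl => ?_
  exact mul_nonneg (hf _) (Fweight_pos hr z hl).le

lemma FfunJ_pos {d : ℕ} (f : (Fin d → ℝ) → ℝ) (hf : ∀ θ, 0 ≤ f θ)
    {r : ℝ} (hr : 0 < r)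
    (hfin : ∀ z : Fin d → ℕ, IntegrableOn (FintegrandJ f z r) (posOrthant d))
    (hnc : ∃ z₁ z₂ : Fin d → ℕ, FfunJ f z₁ r ≠ FfunJ f z₂ r)
    (z : Fin d → ℕ) : 0 < FfunJ f z r := by
  rcases (FfunJ_nonneg f hf hr z).lt_or_eq with h | h
  · exact h
  exfalso
  -- F z = 0 forces f ∘ sqrt = 0 a.e. on the orthant, hence all F z' = 0
  have hmeas := measurableSet_posOrthant d
  have hae0 : 0 ≤ᵐ[volume.restrict (posOrthant d)] FintegrandJ f z r := by
    filter_upwards [MeasureTheory.ae_restrict_mem hmeas] with lam hl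
    exact mul_nonneg (hf _) (Fweight_pos hr z hl).le
  have hzero : FintegrandJ f z r =ᵐ[volume.restrict (posOrthant d)] 0 :=
    (MeasureTheory.integral_eq_zero_iff_of_nonneg_ae hae0 (hfin z)).mp h.symm
  have hallzero : ∀ z' : Fin d → ℕ, FfunJ f z' r = 0 := by
    intro z'
    have h0' : FintegrandJ f z' r =ᵐ[volume.restrict (posOrthant d)] 0 := by
      filter_upwards [MeasureTheory.ae_restrict_mem hmeas, hzero] with lam hl h0
      have hw := Fweight_pos hr z hl
      have hfz : f (fun i => Real.sqrt (lam i)) = 0 := by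
        rcases mul_eq_zero.mp h0 with h | h
        · exact h
        · exact absurd h hw.ne'
      show FintegrandJ f z' r lam = 0
      unfold FintegrandJ
      rw [hfz, zero_mul]
    unfold FfunJ
    rw [MeasureTheory.integral_congr_ae h0']
    simp
  obtain ⟨z₁, z₂, hne⟩ := hnc
  exact hne (by rw [hallzero z₁, hallzero z₂])

lemma exists_adjacent_ne {d : ℕ} (g : (Fin d → ℕ) → ℝ)
    (h : ∃ z₁ z₂, g z₁ ≠ g z₂) :
    ∃ (z : Fin d → ℕ) (i : Fin d), g (Function.update z i (z i + 1)) ≠ g z := by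
  by_contra hcon
  push_neg at hcon
  have hconst : ∀ z : Fin d → ℕ, g z = g (fun _ => 0) := by
    have key : ∀ (n : ℕ) (z : Fin d → ℕ), (∑ i, z i) = n → g z = g (fun _ => 0) := by
      intro n
      induction n with
      | zero =>
        intro z hz
        have : z = fun _ => 0 := by
          funext i
          exact Finset.sum_eq_zero_iff.mp hz i (Finset.mem_univ i)
        rw [this]
      | succ m ih =>
        intro z hz
        have hex : ∃ i, 0 < z i := by
          by_contra hc
          push_neg at hc
          have : ∀ i, z i = 0 := fun i => Nat.le_zero.mp (hc i)
          simp [this] at hz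
        obtain ⟨i, hi⟩ := hex
        set w := Function.update z i (z i - 1) with hw
        have hwz : Function.update w i (w i + 1) = z := by
          funext k
          by_cases hk : k = i
          · subst hk
            simp only [hw, Function.update_self]
            omega
          · simp [hw, Function.update_of_ne hk]
        have hsum : (∑ k, w k) = m := by
          have h1 : (∑ k, w k) = w i + ∑ k ∈ Finset.univ.erase i, w k :=
            (Finset.add_sum_erase Finset.univ w (Finset.mem_univ i)).symm
          have h2 : (∑ k, z k) = z i + ∑ k ∈ Finset.univ.erase i, z k :=
            (Finset.add_sum_erase Finset.univ z (Finset.mem_univ i)).symm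
          have h3 : ∑ k ∈ Finset.univ.erase i, w k = ∑ k ∈ Finset.univ.erase i, z k :=
            Finset.sum_congr rfl fun k hk =>
              Function.update_of_ne (Finset.ne_of_mem_erase hk) _ _
          have h4 : w i = z i - 1 := Function.update_self i (z i - 1) z
          rw [h2] at hz
          rw [h1, h3, h4]
          omega
        calc g z = g (Function.update w i (w i + 1)) := by rw [hwz]
          _ = g w := hcon w i
          _ = g (fun _ => 0) := ih w hsum
    intro z
    exact key (∑ i, z i) z rfl
  obtain ⟨z₁, z₂, hne⟩ := h
  exact hne (by rw [hconst z₁, hconst z₂])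

/-! ### klt lemmas -/

noncomputable def klt (a b : ℝ) : ℝ := a * Real.log (a / b) - a + b

lemma klt_nonneg {a b : ℝ} (ha : 0 < a) (hb : 0 < b) : 0 ≤ klt a b := kl_nonneg ha hb
lemma klt_pos {a b : ℝ} (ha : 0 < a) (hb : 0 < b) (h : a ≠ b) : 0 < klt a b := kl_pos ha hb h

lemma piece_eq_klt {r : ℝ} (hr : r ≠ 0) (a e : ℝ) :
    r * a * Real.log (a / e) - r * a + r * e = klt (r * a) (r * e) := by
  unfold klt; rw [mul_div_mul_left a e hr]

lemma klt_J_bound {a : ℝ} (ha : 0 < a) (k : ℕ) :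
    klt a ((k : ℝ) + 1/2) ≤ a * |Real.log a| + a + 1/2 + k := by
  unfold klt
  have hk : (0:ℝ) < (k:ℝ) + 1/2 := by positivity
  rw [Real.log_div ha.ne' hk.ne']
  have h1 : a * Real.log a ≤ a * |Real.log a| :=
    mul_le_mul_of_nonneg_left (le_abs_self _) ha.le
  have h2 : -Real.log ((k:ℝ) + 1/2) ≤ 1 := by
    have hh : Real.log (1/2 : ℝ) ≤ Real.log ((k:ℝ) + 1/2) :=
      Real.log_le_log (by norm_num) (by push_cast; linarith [Nat.cast_nonneg (α := ℝ) k])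
    have hl2 : Real.log 2 ≤ 1 := by
      have := Real.log_le_sub_one_of_pos (x := 2) (by norm_num)
      linarith
    rw [one_div, Real.log_inv] at hh
    linarith
  have h3 : a * (-Real.log ((k:ℝ) + 1/2)) ≤ a * 1 := mul_le_mul_of_nonneg_left h2 ha.le
  nlinarith

lemma klt_self_bound {a t : ℝ} (ha : 0 < a) (ht : 0 < t) :
    t ≤ 2 * klt a t + 2 * a * Real.log 2 := by
  have hb : (0:ℝ) < t/2 := by linarith
  have h := kl_nonneg ha hb
  have hlog : Real.log (a / (t/2)) = Real.log (a/t) + Real.log 2 := by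
    rw [show a / (t/2) = (a/t) * 2 by field_simp,
       Real.log_mul (by positivity) (by norm_num)]
  unfold klt
  nlinarith

lemma klt_sub_klt {a b ρ : ℝ} (ha : 0 < a) (hb : 0 < b) (hρ : 0 < ρ) :
    klt a b - klt a (b * ρ) = a * Real.log ρ - b * (ρ - 1) := by
  unfold klt
  have h1 : Real.log (a / b) = Real.log a - Real.log b := Real.log_div ha.ne' hb.ne'
  have h2 : Real.log (a / (b * ρ)) = Real.log a - Real.log b - Real.log ρ := by
    rw [Real.log_div ha.ne' (by positivity), Real.log_mul hb.ne' hρ.ne']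
    ring
  rw [h1, h2]
  ring

/-! ### Main section -/

section Main
variable {d : ℕ} (f : (Fin d → ℝ) → ℝ) (r : ℝ) (lam : Fin d → ℝ)

def upd (x : Fin d → ℕ) (i : Fin d) : Fin d → ℕ := Function.update x i (x i + 1)

noncomputable def rho (i : Fin d) (x : Fin d → ℕ) : ℝ :=
  FfunJ f (upd x i) r / FfunJ f x r

noncomputable def JP (i : Fin d) (x : Fin d → ℕ) : ℝ :=
  klt (r * lam i) ((x i : ℝ) + 1/2) * pp r lam x

noncomputable def FP (i : Fin d) (x : Fin d → ℕ) : ℝ :=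
  klt (r * lam i) (((x i : ℝ) + 1/2) * rho f r i x) * pp r lam x

noncomputable def Pf (i : Fin d) (x : Fin d → ℕ) : ℝ :=
  (r * lam i) * Real.log (rho f r i x) * pp r lam x

noncomputable def Qf (i : Fin d) (x : Fin d → ℕ) : ℝ :=
  ((x i : ℝ) + 1/2) * (rho f r i x - 1) * pp r lam x

noncomputable def Hf (i : Fin d) (y : Fin d → ℕ) : ℝ :=
  (y i : ℝ) * Real.log (FfunJ f y r / FfunJ f (Function.update y i (y i - 1)) r) * pp r lam y

variable (hr : 0 < r) (hlam : ∀ i, 0 < lam i) (hgpos : ∀ z, 0 < FfunJ f z r)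

include hr hlam hgpos

lemma rho_pos (i : Fin d) (x : Fin d → ℕ) : 0 < rho f r i x :=
  div_pos (hgpos _) (hgpos _)

lemma summable_pp_half_mul (i : Fin d) :
    Summable (fun x : Fin d → ℕ => ((x i : ℝ) + 1/2) * pp r lam x) := by
  have h1 := summable_coord_mul_pp r lam hr hlam i
  have h2 := (summable_pp r lam hr hlam).mul_left (1/2 : ℝ)
  exact (h1.add h2).congr fun x => by ring

lemma JP_nonneg (i : Fin d) (x : Fin d → ℕ) : 0 ≤ JP r lam i x :=
  mul_nonneg (klt_nonneg (by have := hlam i; positivity) (by positivity))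
    (pp_pos r lam hr hlam x).le

lemma FP_nonneg (i : Fin d) (x : Fin d → ℕ) : 0 ≤ FP f r lam i x :=
  mul_nonneg (klt_nonneg (by have := hlam i; positivity)
    (by have := rho_pos f r lam hr hlam hgpos i x; positivity)) (pp_pos r lam hr hlam x).le

lemma summable_JP (i : Fin d) : Summable (JP r lam i) := by
  have hbound : Summable (fun x : Fin d → ℕ =>
      (r * lam i * |Real.log (r * lam i)| + r * lam i + 1/2) * pp r lam x
        + (x i : ℝ) * pp r lam x) :=
    ((summable_pp r lam hr hlam).mul_left _).add (summable_coord_mul_pp r lam hr hlam i)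
  refine Summable.of_nonneg_of_le (JP_nonneg f r lam hr hlam hgpos i) (fun x => ?_) hbound
  unfold JP
  have hb := klt_J_bound (a := r * lam i) (by have := hlam i; positivity) (x i)
  have hp := (pp_pos r lam hr hlam x).le
  nlinarith [mul_le_mul_of_nonneg_right hb hp]

lemma summable_sumJ :
    Summable (fun x : Fin d → ℕ => (∑ i, klt (r * lam i) ((x i : ℝ) + 1/2)) * pp r lam x) := by
  have h : Summable (fun x : Fin d → ℕ => ∑ i, JP r lam i x) :=
    summable_sum fun i _ => summable_JP f r lam hr hlam hgpos i
  exact h.congr fun x => by rw [Finset.sum_mul]; rfl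

lemma summable_FP
    (hs : Summable (fun x : Fin d → ℕ =>
      (∑ j, klt (r * lam j) (((x j : ℝ) + 1/2) * rho f r j x)) * pp r lam x))
    (i : Fin d) : Summable (FP f r lam i) := by
  refine Summable.of_nonneg_of_le (FP_nonneg f r lam hr hlam hgpos i) (fun x => ?_) hs
  have hp := (pp_pos r lam hr hlam x).le
  rw [Finset.sum_mul]
  refine Finset.single_le_sum (f := fun j => FP f r lam j x) (fun j _ => FP_nonneg f r lam hr hlam hgpos j x) (Finset.mem_univ i)

lemma summable_TP (i : Fin d)
    (hs : Summable (FP f r lam i)) :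
    Summable (fun x : Fin d → ℕ => ((x i : ℝ) + 1/2) * rho f r i x * pp r lam x) := by
  have ha : 0 < r * lam i := by have := hlam i; positivity
  have hbound : Summable (fun x : Fin d → ℕ =>
      2 * FP f r lam i x + (2 * (r * lam i) * Real.log 2) * pp r lam x) :=
    (hs.mul_left 2).add ((summable_pp r lam hr hlam).mul_left _)
  refine Summable.of_nonneg_of_le (fun x => ?_) (fun x => ?_) hbound
  · have h1 := rho_pos f r lam hr hlam hgpos i x
    have h2 := (pp_pos r lam hr hlam x).le
    positivity
  · have ht : 0 < ((x i : ℝ) + 1/2) * rho f r i x :=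
      mul_pos (by positivity) (rho_pos f r lam hr hlam hgpos i x)
    have hb := klt_self_bound ha ht
    have hp := (pp_pos r lam hr hlam x).le
    unfold FP
    nlinarith [mul_le_mul_of_nonneg_right hb hp]

lemma summable_Qf (i : Fin d)
    (hTP : Summable (fun x : Fin d → ℕ => ((x i : ℝ) + 1/2) * rho f r i x * pp r lam x)) :
    Summable (Qf f r lam i) := by
  refine (hTP.sub (summable_pp_half_mul f r lam hr hlam hgpos i)).congr fun x => ?_
  unfold Qf; ring

lemma JP_sub_FP (i : Fin d) (x : Fin d → ℕ) :
    JP r lam i x - FP f r lam i x = Pf f r lam i x - Qf f r lam i x := by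
  have h := klt_sub_klt (a := r * lam i) (b := (x i : ℝ) + 1/2) (ρ := rho f r i x)
    (by have := hlam i; positivity) (by positivity) (rho_pos f r lam hr hlam hgpos i x)
  unfold JP FP Pf Qf
  rw [show klt (r * lam i) ((x i : ℝ) + 1/2) * pp r lam x
      - klt (r * lam i) (((x i : ℝ) + 1/2) * rho f r i x) * pp r lam x
      = (klt (r * lam i) ((x i : ℝ) + 1/2)
        - klt (r * lam i) (((x i : ℝ) + 1/2) * rho f r i x)) * pp r lam x by ring, h]
  ring

lemma summable_Pf (i : Fin d)
    (hFP : Summable (FP f r lam i)) (hQ : Summable (Qf f r lam i)) :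
    Summable (Pf f r lam i) := by
  refine (((summable_JP f r lam hr hlam hgpos i).sub hFP).add hQ).congr fun x => ?_
  rw [JP_sub_FP f r lam hr hlam hgpos i x]; ring

omit hr hlam hgpos in
lemma upd_injective (i : Fin d) : Function.Injective (fun x : Fin d → ℕ => upd x i) := by
  intro a b hab
  simp only [upd] at hab
  funext k
  by_cases hk : k = i
  · subst hk
    have h := congrFun hab k
    simp only [Function.update_self] at h
    omega
  · have h := congrFun hab k
    rwa [Function.update_of_ne hk, Function.update_of_ne hk] at h

omit hr hlam hgpos in
lemma upd_down (x : Fin d → ℕ) (i : Fin d) :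
    Function.update (upd x i) i (upd x i i - 1) = x := by
  unfold upd
  funext k
  by_cases hk : k = i
  · subst hk; simp [Function.update_self]
  · simp [Function.update_of_ne hk]

omit hgpos in
lemma Hf_comp (i : Fin d) (x : Fin d → ℕ) :
    Hf f r lam i (upd x i) = Pf f r lam i x := by
  unfold Hf Pf rho
  rw [upd_down x i]
  have h1 : (upd x i) i = x i + 1 := by unfold upd; simp
  rw [h1]
  have h2 := pp_shift r lam hr hlam x i
  push_cast
  calc ((x i : ℝ) + 1) * Real.log (FfunJ f (upd x i) r / FfunJ f x r) * pp r lam (upd x i)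
      = Real.log (FfunJ f (upd x i) r / FfunJ f x r)
        * (((x i : ℝ) + 1) * pp r lam (Function.update x i (x i + 1))) := by
        unfold upd; ring
    _ = Real.log (FfunJ f (upd x i) r / FfunJ f x r) * (r * lam i * pp r lam x) := by rw [h2]
    _ = r * lam i * Real.log (FfunJ f (upd x i) r / FfunJ f x r) * pp r lam x := by ring

omit hr hlam hgpos in
lemma Hf_vanish (i : Fin d) :
    ∀ y ∉ Set.range (fun x : Fin d → ℕ => upd x i), Hf f r lam i y = 0 := by
  intro y hy
  by_cases h0 : y i = 0
  · unfold Hf; rw [h0]; simp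
  · exfalso
    apply hy
    refine ⟨Function.update y i (y i - 1), ?_⟩
    unfold upd
    funext k
    by_cases hk : k = i
    · subst hk; simp only [Function.update_self]; omega
    · simp [Function.update_of_ne hk]

lemma tsum_Pf_eq_tsum_Hf (i : Fin d) :
    ∑' x : Fin d → ℕ, Pf f r lam i x = ∑' y : Fin d → ℕ, Hf f r lam i y := by
  rw [← Function.Injective.tsum_eq (upd_injective i) (f := Hf f r lam i)
    (by
      intro y hy
      by_contra hmem
      exact hy (Hf_vanish f r lam i y hmem))]
  exact tsum_congr fun x => (Hf_comp f r lam hr hlam i x).symm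

lemma summable_Hf (i : Fin d) (hP : Summable (Pf f r lam i)) :
    Summable (Hf f r lam i) := by
  refine (Function.Injective.summable_iff (upd_injective i)
    (fun y hy => Hf_vanish f r lam i y hy)).mp ?_
  exact hP.congr fun x => (Hf_comp f r lam hr hlam i x).symm

noncomputable def Tm (i : Fin d) (y : Fin d → ℕ) : ℝ :=
  (y i : ℝ) * Real.log (FfunJ f y r / FfunJ f (Function.update y i (y i - 1)) r)
    - ((y i : ℝ) + 1/2) * (rho f r i y - 1)

omit hr hlam hgpos in
lemma Hf_sub_Qf (i : Fin d) (y : Fin d → ℕ) :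
    Hf f r lam i y - Qf f r lam i y = Tm f r i y * pp r lam y := by
  unfold Hf Qf Tm; ring

omit hr hlam in
lemma Tm_ge (i : Fin d) (y : Fin d → ℕ) :
    (y i : ℝ) * (FfunJ f y r - FfunJDown f y r i) / FfunJ f y r
      + ((y i : ℝ) + 1/2) * (FfunJ f y r - FfunJ f (Function.update y i (y i + 1)) r)
        / FfunJ f y r ≤ Tm f r i y := by
  have hG := hgpos y
  have hupd : upd y i = Function.update y i (y i + 1) := rfl
  have hsecond : ((y i : ℝ) + 1/2) * (FfunJ f y r - FfunJ f (Function.update y i (y i + 1)) r)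
      / FfunJ f y r = -(((y i : ℝ) + 1/2) * (rho f r i y - 1)) := by
    unfold rho
    rw [hupd]
    field_simp
    ring
  by_cases h0 : y i = 0
  · unfold Tm
    rw [hsecond, h0]
    push_cast
    simp
  · have hD := hgpos (Function.update y i (y i - 1))
    have hdown : FfunJDown f y r i = FfunJ f (Function.update y i (y i - 1)) r := if_neg h0
    have ht : 0 < FfunJ f y r / FfunJ f (Function.update y i (y i - 1)) r := div_pos hG hD
    have hlog := log_ge_one_sub_inv ht
    have hinv : 1 - 1 / (FfunJ f y r / FfunJ f (Function.update y i (y i - 1)) r)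
        = (FfunJ f y r - FfunJ f (Function.update y i (y i - 1)) r) / FfunJ f y r := by
      field_simp
    rw [hinv] at hlog
    have hymul := mul_le_mul_of_nonneg_left hlog (Nat.cast_nonneg (α := ℝ) (y i))
    unfold Tm
    rw [hsecond, hdown]
    rw [mul_div_assoc]
    linarith

omit hr hlam in
lemma Tm_gt (i : Fin d) (y : Fin d → ℕ) (h0 : y i ≠ 0)
    (hne : FfunJ f (Function.update y i (y i - 1)) r ≠ FfunJ f y r) :
    (y i : ℝ) * (FfunJ f y r - FfunJDown f y r i) / FfunJ f y r
      + ((y i : ℝ) + 1/2) * (FfunJ f y r - FfunJ f (Function.update y i (y i + 1)) r)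
        / FfunJ f y r < Tm f r i y := by
  have hG := hgpos y
  have hupd : upd y i = Function.update y i (y i + 1) := rfl
  have hsecond : ((y i : ℝ) + 1/2) * (FfunJ f y r - FfunJ f (Function.update y i (y i + 1)) r)
      / FfunJ f y r = -(((y i : ℝ) + 1/2) * (rho f r i y - 1)) := by
    unfold rho
    rw [hupd]
    field_simp
    ring
  have hD := hgpos (Function.update y i (y i - 1))
  have hdown : FfunJDown f y r i = FfunJ f (Function.update y i (y i - 1)) r := if_neg h0
  have ht : 0 < FfunJ f y r / FfunJ f (Function.update y i (y i - 1)) r := div_pos hG hD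
  have htne : FfunJ f y r / FfunJ f (Function.update y i (y i - 1)) r ≠ 1 := by
    intro hcon
    exact hne ((div_eq_one_iff_eq hD.ne').mp hcon).symm
  have hlog := log_gt_one_sub_inv ht htne
  have hinv : 1 - 1 / (FfunJ f y r / FfunJ f (Function.update y i (y i - 1)) r)
      = (FfunJ f y r - FfunJ f (Function.update y i (y i - 1)) r) / FfunJ f y r := by
    field_simp
  rw [hinv] at hlog
  have hypos : (0:ℝ) < (y i : ℝ) := by
    have : 0 < y i := Nat.pos_of_ne_zero h0
    exact_mod_cast this
  have hymul := mul_lt_mul_of_pos_left hlog hypos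
  unfold Tm
  rw [hsecond, hdown]
  rw [mul_div_assoc]
  linarith

omit hr hlam in
lemma sum_Tm_nonneg (y : Fin d → ℕ)
    (hq : 0 ≤ ∑ i, (y i : ℝ) * (FfunJ f y r - FfunJDown f y r i) +
        ∑ i, ((y i : ℝ) + 1/2) *
          (FfunJ f y r - FfunJ f (Function.update y i (y i + 1)) r)) :
    0 ≤ ∑ i, Tm f r i y := by
  have hG := hgpos y
  have h1 : 0 ≤ (∑ i, (y i : ℝ) * (FfunJ f y r - FfunJDown f y r i) +
      ∑ i, ((y i : ℝ) + 1/2) *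
        (FfunJ f y r - FfunJ f (Function.update y i (y i + 1)) r)) / FfunJ f y r :=
    div_nonneg hq hG.le
  have h2 : (∑ i, (y i : ℝ) * (FfunJ f y r - FfunJDown f y r i) +
      ∑ i, ((y i : ℝ) + 1/2) *
        (FfunJ f y r - FfunJ f (Function.update y i (y i + 1)) r)) / FfunJ f y r
      = ∑ i, ((y i : ℝ) * (FfunJ f y r - FfunJDown f y r i) / FfunJ f y r
        + ((y i : ℝ) + 1/2) * (FfunJ f y r - FfunJ f (Function.update y i (y i + 1)) r)
          / FfunJ f y r) := by
    rw [add_div, Finset.sum_div, Finset.sum_div, ← Finset.sum_add_distrib]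
  rw [h2] at h1
  exact h1.trans (Finset.sum_le_sum fun i _ => Tm_ge f r hgpos i y)

omit hr hlam in
lemma sum_Tm_pos (y : Fin d → ℕ) (i₀ : Fin d) (h0 : y i₀ ≠ 0)
    (hne : FfunJ f (Function.update y i₀ (y i₀ - 1)) r ≠ FfunJ f y r)
    (hq : 0 ≤ ∑ i, (y i : ℝ) * (FfunJ f y r - FfunJDown f y r i) +
        ∑ i, ((y i : ℝ) + 1/2) *
          (FfunJ f y r - FfunJ f (Function.update y i (y i + 1)) r)) :
    0 < ∑ i, Tm f r i y := by
  have hG := hgpos y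
  have h1 : 0 ≤ (∑ i, (y i : ℝ) * (FfunJ f y r - FfunJDown f y r i) +
      ∑ i, ((y i : ℝ) + 1/2) *
        (FfunJ f y r - FfunJ f (Function.update y i (y i + 1)) r)) / FfunJ f y r :=
    div_nonneg hq hG.le
  have h2 : (∑ i, (y i : ℝ) * (FfunJ f y r - FfunJDown f y r i) +
      ∑ i, ((y i : ℝ) + 1/2) *
        (FfunJ f y r - FfunJ f (Function.update y i (y i + 1)) r)) / FfunJ f y r
      = ∑ i, ((y i : ℝ) * (FfunJ f y r - FfunJDown f y r i) / FfunJ f y r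
        + ((y i : ℝ) + 1/2) * (FfunJ f y r - FfunJ f (Function.update y i (y i + 1)) r)
          / FfunJ f y r) := by
    rw [add_div, Finset.sum_div, Finset.sum_div, ← Finset.sum_add_distrib]
  rw [h2] at h1
  have hlt : ∑ i, ((y i : ℝ) * (FfunJ f y r - FfunJDown f y r i) / FfunJ f y r
      + ((y i : ℝ) + 1/2) * (FfunJ f y r - FfunJ f (Function.update y i (y i + 1)) r)
        / FfunJ f y r) < ∑ i, Tm f r i y := by
    refine Finset.sum_lt_sum (fun i _ => Tm_ge f r hgpos i y) ⟨i₀, Finset.mem_univ i₀, ?_⟩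
    exact Tm_gt f r hgpos i₀ y h0 hne
  linarith

end Main

theorem improved_estimation_jeffreys
    (d : ℕ) (hd : 1 ≤ d) (r : ℝ) (hr : 0 < r)
    (f : (Fin d → ℝ) → ℝ) (hf_nonneg : ∀ θ, 0 ≤ f θ)
    -- for every r > 0 and z, F(z,r) is finite
    (hfin : ∀ r' : ℝ, 0 < r' → ∀ z : Fin d → ℕ,
      IntegrableOn (FintegrandJ f z r') (posOrthant d))
    -- for every r > 0, z ↦ F(z,r) is not constant
    (hnotconst : ∀ r' : ℝ, 0 < r' →
      ∃ z₁ z₂ : Fin d → ℕ, FfunJ f z₁ r' ≠ FfunJ f z₂ r')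
    -- the key inequality
    (hineq : ∀ (z : Fin d → ℕ) (r' : ℝ), 0 < r' →
      0 ≤ ∑ i, (z i : ℝ) * (FfunJ f z r' - FfunJDown f z r' i) +
          ∑ i, ((z i : ℝ) + 1/2) *
            (FfunJ f z r' - FfunJ f (Function.update z i (z i + 1)) r'))
    (lam : Fin d → ℝ) (hlam : lam ∈ posOrthant d) :
    estRisk r lam (fun x i => ((x i : ℝ) + 1/2) / r *
        (FfunJ f (Function.update x i (x i + 1)) r / FfunJ f x r))
    < estRisk r lam (fun x i => ((x i : ℝ) + 1/2) / r) := by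
  have hlam' : ∀ i, 0 < lam i := hlam
  have hgpos : ∀ z, 0 < FfunJ f z r :=
    FfunJ_pos f hf_nonneg hr (hfin r hr) (hnotconst r hr)
  have hapos : ∀ i, 0 < r * lam i := fun i => by have := hlam' i; positivity
  -- rewrite the two risks
  have hBeq : estRisk r lam (fun x i => ((x i : ℝ) + 1/2) / r)
      = ∑' x : Fin d → ℕ, (∑ i, klt (r * lam i) ((x i : ℝ) + 1/2)) * pp r lam x := by
    refine tsum_congr fun x => ?_
    congr 1
    refine Finset.sum_congr rfl fun i _ => ?_
    have h1 := piece_eq_klt hr.ne' (lam i) (((x i : ℝ) + 1/2) / r)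
    have h2 : r * (((x i : ℝ) + 1/2) / r) = (x i : ℝ) + 1/2 := by
      field_simp
    rw [h1, h2]
  have hAeq : estRisk r lam (fun x i => ((x i : ℝ) + 1/2) / r *
        (FfunJ f (Function.update x i (x i + 1)) r / FfunJ f x r))
      = ∑' x : Fin d → ℕ,
          (∑ i, klt (r * lam i) (((x i : ℝ) + 1/2) * rho f r i x)) * pp r lam x := by
    refine tsum_congr fun x => ?_
    congr 1
    refine Finset.sum_congr rfl fun i _ => ?_
    have h1 := piece_eq_klt hr.ne' (lam i)
      (((x i : ℝ) + 1/2) / r * (FfunJ f (Function.update x i (x i + 1)) r / FfunJ f x r))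
    have hro : rho f r i x = FfunJ f (Function.update x i (x i + 1)) r / FfunJ f x r := rfl
    have h2 : r * (((x i : ℝ) + 1/2) / r
          * (FfunJ f (Function.update x i (x i + 1)) r / FfunJ f x r))
        = ((x i : ℝ) + 1/2) * rho f r i x := by
      rw [hro]
      field_simp [(hgpos x).ne']
    rw [h1, h2]
  rw [hAeq, hBeq]
  have hBsum := summable_sumJ f r lam hr hlam' hgpos
  by_cases hAs : Summable (fun x : Fin d → ℕ =>
      (∑ i, klt (r * lam i) (((x i : ℝ) + 1/2) * rho f r i x)) * pp r lam x)
  · -- main case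
    have hJP := fun i => summable_JP f r lam hr hlam' hgpos i
    have hFP := fun i => summable_FP f r lam hr hlam' hgpos hAs i
    have hTP := fun i => summable_TP f r lam hr hlam' hgpos i (hFP i)
    have hQ := fun i => summable_Qf f r lam hr hlam' hgpos i (hTP i)
    have hP := fun i => summable_Pf f r lam hr hlam' hgpos i (hFP i) (hQ i)
    have hH := fun i => summable_Hf f r lam hr hlam' hgpos i (hP i)
    have e1 : ∑' x : Fin d → ℕ, (∑ i, klt (r * lam i) ((x i : ℝ) + 1/2)) * pp r lam x
        = ∑ i, ∑' x : Fin d → ℕ, JP r lam i x := by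
      rw [← Summable.tsum_finsetSum fun i _ => hJP i]
      exact tsum_congr fun x => by rw [Finset.sum_mul]; rfl
    have e2 : ∑' x : Fin d → ℕ,
          (∑ i, klt (r * lam i) (((x i : ℝ) + 1/2) * rho f r i x)) * pp r lam x
        = ∑ i, ∑' x : Fin d → ℕ, FP f r lam i x := by
      rw [← Summable.tsum_finsetSum fun i _ => hFP i]
      exact tsum_congr fun x => by rw [Finset.sum_mul]; rfl
    have e3 : ∀ i, (∑' x : Fin d → ℕ, JP r lam i x) - ∑' x : Fin d → ℕ, FP f r lam i x
        = ∑' x : Fin d → ℕ, (Hf f r lam i x - Qf f r lam i x) := by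
      intro i
      calc (∑' x : Fin d → ℕ, JP r lam i x) - ∑' x : Fin d → ℕ, FP f r lam i x
          = ∑' x : Fin d → ℕ, (JP r lam i x - FP f r lam i x) :=
            (Summable.tsum_sub (hJP i) (hFP i)).symm
        _ = ∑' x : Fin d → ℕ, (Pf f r lam i x - Qf f r lam i x) :=
            tsum_congr fun x => JP_sub_FP f r lam hr hlam' hgpos i x
        _ = (∑' x : Fin d → ℕ, Pf f r lam i x) - ∑' x : Fin d → ℕ, Qf f r lam i x :=
            Summable.tsum_sub (hP i) (hQ i)
        _ = (∑' x : Fin d → ℕ, Hf f r lam i x) - ∑' x : Fin d → ℕ, Qf f r lam i x := by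
            rw [tsum_Pf_eq_tsum_Hf f r lam hr hlam' hgpos i]
        _ = ∑' x : Fin d → ℕ, (Hf f r lam i x - Qf f r lam i x) :=
            (Summable.tsum_sub (hH i) (hQ i)).symm
    have e4 : (∑' x : Fin d → ℕ, (∑ i, klt (r * lam i) ((x i : ℝ) + 1/2)) * pp r lam x)
        - ∑' x : Fin d → ℕ,
            (∑ i, klt (r * lam i) (((x i : ℝ) + 1/2) * rho f r i x)) * pp r lam x
        = ∑' x : Fin d → ℕ, ∑ i, (Hf f r lam i x - Qf f r lam i x) := by
      rw [e1, e2, ← Finset.sum_sub_distrib]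
      rw [Finset.sum_congr rfl fun i _ => e3 i]
      exact (Summable.tsum_finsetSum fun i _ => (hH i).sub (hQ i)).symm
    -- positivity of the difference
    have hVnonneg : ∀ y : Fin d → ℕ, 0 ≤ ∑ i, (Hf f r lam i y - Qf f r lam i y) := by
      intro y
      have hrw : ∑ i, (Hf f r lam i y - Qf f r lam i y) = (∑ i, Tm f r i y) * pp r lam y := by
        rw [Finset.sum_mul]
        exact Finset.sum_congr rfl fun i _ => Hf_sub_Qf f r lam i y
      rw [hrw]
      exact mul_nonneg (sum_Tm_nonneg f r hgpos y (hineq y r hr)) (pp_pos r lam hr hlam' y).le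
    obtain ⟨z, i₀, hadj⟩ := exists_adjacent_ne (fun z => FfunJ f z r) (hnotconst r hr)
    set y₀ : Fin d → ℕ := Function.update z i₀ (z i₀ + 1) with hy₀
    have hy0i : y₀ i₀ = z i₀ + 1 := by rw [hy₀]; simp
    have hdowny : Function.update y₀ i₀ (y₀ i₀ - 1) = z := by
      rw [hy0i, hy₀]
      rw [Function.update_idem]
      simp
    have hVpos : 0 < ∑ i, (Hf f r lam i y₀ - Qf f r lam i y₀) := by
      have hrw : ∑ i, (Hf f r lam i y₀ - Qf f r lam i y₀)
          = (∑ i, Tm f r i y₀) * pp r lam y₀ := by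
        rw [Finset.sum_mul]
        exact Finset.sum_congr rfl fun i _ => Hf_sub_Qf f r lam i y₀
      rw [hrw]
      refine mul_pos ?_ (pp_pos r lam hr hlam' y₀)
      refine sum_Tm_pos f r hgpos y₀ i₀ (by rw [hy0i]; omega) ?_ (hineq y₀ r hr)
      rw [hdowny]
      exact fun hcon => hadj hcon.symm
    have hD : 0 < ∑' x : Fin d → ℕ, ∑ i, (Hf f r lam i x - Qf f r lam i x) :=
      Summable.tsum_pos (summable_sum fun i _ => (hH i).sub (hQ i)) hVnonneg y₀ hVpos
    linarith [e4, hD]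
  · -- non-summable case : the tsum is zero, while the Jeffreys risk is positive
    rw [tsum_eq_zero_of_not_summable hAs]
    have hnonneg : ∀ x : Fin d → ℕ,
        0 ≤ (∑ i, klt (r * lam i) ((x i : ℝ) + 1/2)) * pp r lam x := fun x =>
      mul_nonneg (Finset.sum_nonneg fun i _ => klt_nonneg (hapos i) (by positivity))
        (pp_pos r lam hr hlam' x).le
    set i₀ : Fin d := ⟨0, hd⟩ with hi₀
    by_cases hc : r * lam i₀ = 1/2
    · refine Summable.tsum_pos hBsum hnonneg (fun _ => 1) ?_
      refine mul_pos (Finset.sum_pos' (fun i _ => klt_nonneg (hapos i) (by positivity))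
        ⟨i₀, Finset.mem_univ i₀, ?_⟩) (pp_pos r lam hr hlam' _)
      refine klt_pos (hapos i₀) (by norm_num) ?_
      rw [hc]; norm_num
    · refine Summable.tsum_pos hBsum hnonneg (fun _ => 0) ?_
      refine mul_pos (Finset.sum_pos' (fun i _ => klt_nonneg (hapos i) (by positivity))
        ⟨i₀, Finset.mem_univ i₀, ?_⟩) (pp_pos r lam hr hlam' _)
      refine klt_pos (hapos i₀) (by norm_num) ?_
      simpa using hc
end
end

section
/- Suppose that for every z ∈ ℕ^d and every t > 0, F(z,t) is finite and positive and Σ_{i=1}^d z_i (F(z,t) − F(z−δ_i,t)) + Σ_{i=1}^d (z_i+β_i)(F(z,t) − F(z+δ_i,t)) ≥ 0. Then for every r > 0 and every λ ∈ (0,∞)^d there exists ε > 0 such that Σ_{z∈ℕ^d} max_{t∈[r−ε,r+ε]} { |log F(z,t)| · (Σ_{i=1}^d z_i + 1) · ∏_{i=1}^d (tλ_i)^{z_i} e^{−tλ_i}/z_i! } < ∞; in particular, Σ_{z∈ℕ^d} |log F(z,r)| ∏_{i=1}^d (rλ_i)^{z_i} e^{−rλ_i}/z_i! < ∞. -/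
open MeasureTheory Real Filter

noncomputable section

/-- The integrand of the function `F(z,t)`. -/
noncomputable def Fintegrand {d : ℕ} (β : Fin d → ℝ) (f : (Fin d → ℝ) → ℝ)
    (z : Fin d → ℕ) (t : ℝ) (lam : Fin d → ℝ) : ℝ :=
  f (fun i => Real.sqrt (lam i)) *
    ∏ i, t ^ ((z i : ℝ) + β i) * lam i ^ ((z i : ℝ) + β i - 1) * Real.exp (-(t * lam i)) /
      Real.Gamma ((z i : ℝ) + β i)

/-- `F(z,t) = ∫ f(√λ) ∏ t^{z_i+β_i} λ_i^{z_i+β_i-1} e^{-tλ_i}/Γ(z_i+β_i) dλ`. -/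
noncomputable def Ffun {d : ℕ} (β : Fin d → ℝ) (f : (Fin d → ℝ) → ℝ)
    (z : Fin d → ℕ) (t : ℝ) : ℝ :=
  ∫ lam in posOrthant d, Fintegrand β f z t lam

/-- `F(z - δ_i, t)` with the convention that it equals `1` when `z i = 0`. -/
noncomputable def FfunDown {d : ℕ} (β : Fin d → ℝ) (f : (Fin d → ℝ) → ℝ)
    (z : Fin d → ℕ) (t : ℝ) (i : Fin d) : ℝ :=
  if z i = 0 then 1 else Ffun β f (Function.update z i (z i - 1)) t

variable {d : ℕ} (β : Fin d → ℝ) (f : (Fin d → ℝ) → ℝ)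

lemma Fkey (hpos : ∀ (z : Fin d → ℕ) (t : ℝ), 0 < t → 0 < Ffun β f z t)
    (hineq : ∀ (z : Fin d → ℕ) (t : ℝ), 0 < t →
      0 ≤ ∑ i, (z i : ℝ) * (Ffun β f z t - FfunDown β f z t i) +
          ∑ i, ((z i : ℝ) + β i) *
            (Ffun β f z t - Ffun β f (Function.update z i (z i + 1)) t))
    (z : Fin d → ℕ) (t : ℝ) (ht : 0 < t) :
    (∑ i, (z i : ℝ) * FfunDown β f z t i) +
      ∑ i, ((z i : ℝ) + β i) * Ffun β f (Function.update z i (z i + 1)) t ≤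
      (2 * (∑ i, (z i : ℝ)) + ∑ i, β i) * Ffun β f z t := by
  have h := hineq z t ht
  have e1 : ∑ i, (z i : ℝ) * (Ffun β f z t - FfunDown β f z t i)
      = (∑ i, (z i : ℝ)) * Ffun β f z t - ∑ i, (z i : ℝ) * FfunDown β f z t i := by
    simp only [mul_sub]
    rw [Finset.sum_sub_distrib, ← Finset.sum_mul]
  have e2 : ∑ i, ((z i : ℝ) + β i) *
        (Ffun β f z t - Ffun β f (Function.update z i (z i + 1)) t)
      = ((∑ i, (z i : ℝ)) + ∑ i, β i) * Ffun β f z t -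
        ∑ i, ((z i : ℝ) + β i) * Ffun β f (Function.update z i (z i + 1)) t := by
    simp only [mul_sub]
    rw [Finset.sum_sub_distrib, ← Finset.sum_mul, Finset.sum_add_distrib]
  rw [e1, e2] at h
  linarith

lemma FfunDown_nonneg (hpos : ∀ (z : Fin d → ℕ) (t : ℝ), 0 < t → 0 < Ffun β f z t)
    (z : Fin d → ℕ) (t : ℝ) (ht : 0 < t) (i : Fin d) : 0 ≤ FfunDown β f z t i := by
  unfold FfunDown
  split
  · norm_num
  · exact (hpos _ t ht).le

lemma Fstep_up (hβ : ∀ i, 0 < β i)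
    (hpos : ∀ (z : Fin d → ℕ) (t : ℝ), 0 < t → 0 < Ffun β f z t)
    (hineq : ∀ (z : Fin d → ℕ) (t : ℝ), 0 < t →
      0 ≤ ∑ i, (z i : ℝ) * (Ffun β f z t - FfunDown β f z t i) +
          ∑ i, ((z i : ℝ) + β i) *
            (Ffun β f z t - Ffun β f (Function.update z i (z i + 1)) t))
    (z : Fin d → ℕ) (t : ℝ) (ht : 0 < t) (i : Fin d) :
    β i * Ffun β f (Function.update z i (z i + 1)) t ≤
      (2 * (∑ i, (z i : ℝ)) + ∑ i, β i) * Ffun β f z t := by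
  have key := Fkey β f hpos hineq z t ht
  have hX : 0 ≤ ∑ j, (z j : ℝ) * FfunDown β f z t j :=
    Finset.sum_nonneg fun j _ =>
      mul_nonneg (Nat.cast_nonneg _) (FfunDown_nonneg β f hpos z t ht j)
  have h1 : ((z i : ℝ) + β i) * Ffun β f (Function.update z i (z i + 1)) t ≤
      ∑ j, ((z j : ℝ) + β j) * Ffun β f (Function.update z j (z j + 1)) t :=
    Finset.single_le_sum (f := fun j => ((z j : ℝ) + β j) * Ffun β f (Function.update z j (z j + 1)) t)
      (fun j _ => mul_nonneg (by have h1 := hβ j; have h2 : (0:ℝ) ≤ (z j : ℝ) := Nat.cast_nonneg _; linarith) (hpos _ t ht).le) (Finset.mem_univ i)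
  have h2 : β i * Ffun β f (Function.update z i (z i + 1)) t ≤
      ((z i : ℝ) + β i) * Ffun β f (Function.update z i (z i + 1)) t := by
    apply mul_le_mul_of_nonneg_right _ (hpos _ t ht).le
    have : (0:ℝ) ≤ (z i : ℝ) := Nat.cast_nonneg _
    linarith
  linarith

lemma Fstep_down (hβ : ∀ i, 0 < β i)
    (hpos : ∀ (z : Fin d → ℕ) (t : ℝ), 0 < t → 0 < Ffun β f z t)
    (hineq : ∀ (z : Fin d → ℕ) (t : ℝ), 0 < t →
      0 ≤ ∑ i, (z i : ℝ) * (Ffun β f z t - FfunDown β f z t i) +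
          ∑ i, ((z i : ℝ) + β i) *
            (Ffun β f z t - Ffun β f (Function.update z i (z i + 1)) t))
    (z : Fin d → ℕ) (t : ℝ) (ht : 0 < t) (i : Fin d) (hz : z i ≠ 0) :
    Ffun β f (Function.update z i (z i - 1)) t ≤
      (2 * (∑ i, (z i : ℝ)) + ∑ i, β i) * Ffun β f z t := by
  have key := Fkey β f hpos hineq z t ht
  have hY : 0 ≤ ∑ j, ((z j : ℝ) + β j) * Ffun β f (Function.update z j (z j + 1)) t :=
    Finset.sum_nonneg fun j _ =>
      mul_nonneg (by have h1 := hβ j; have h2 : (0:ℝ) ≤ (z j : ℝ) := Nat.cast_nonneg _; linarith) (hpos _ t ht).le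
  have h1 : (z i : ℝ) * FfunDown β f z t i ≤ ∑ j, (z j : ℝ) * FfunDown β f z t j :=
    Finset.single_le_sum (f := fun j => (z j : ℝ) * FfunDown β f z t j)
      (fun j _ => mul_nonneg (Nat.cast_nonneg _) (FfunDown_nonneg β f hpos z t ht j)) (Finset.mem_univ i)
  have hd : FfunDown β f z t i = Ffun β f (Function.update z i (z i - 1)) t := by
    unfold FfunDown; rw [if_neg hz]
  have hz1 : (1 : ℝ) ≤ (z i : ℝ) := by exact_mod_cast Nat.one_le_iff_ne_zero.mpr hz
  have h2 : Ffun β f (Function.update z i (z i - 1)) t ≤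
      (z i : ℝ) * FfunDown β f z t i := by
    rw [hd]
    nlinarith [hpos (Function.update z i (z i - 1)) t ht]
  linarith

lemma Fsandwich (hβ : ∀ i, 0 < β i)
    (hpos : ∀ (z : Fin d → ℕ) (t : ℝ), 0 < t → 0 < Ffun β f z t)
    (hineq : ∀ (z : Fin d → ℕ) (t : ℝ), 0 < t →
      0 ≤ ∑ i, (z i : ℝ) * (Ffun β f z t - FfunDown β f z t i) +
          ∑ i, ((z i : ℝ) + β i) *
            (Ffun β f z t - Ffun β f (Function.update z i (z i + 1)) t))
    (K : ℝ) (hK2 : 2 + ∑ i, β i ≤ K) (hKβ : ∀ i, 2 + ∑ i, β i ≤ β i * K) :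
    ∀ (n : ℕ) (z : Fin d → ℕ) (t : ℝ), 0 < t → (∑ i, z i) = n →
      Ffun β f z t ≤ (K ^ n * ((n + 2).factorial : ℝ)) * Ffun β f 0 t ∧
      Ffun β f 0 t ≤ (K ^ n * ((n + 2).factorial : ℝ)) * Ffun β f z t := by
  have hB0 : (0:ℝ) ≤ ∑ i, β i := Finset.sum_nonneg fun i _ => (hβ i).le
  have hKpos : (0:ℝ) < K := by linarith
  intro n
  induction n with
  | zero =>
    intro z t ht hsum
    have hz0 : z = 0 := funext fun i => Finset.sum_eq_zero_iff.mp hsum i (Finset.mem_univ i)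
    subst hz0
    have hF0 := hpos 0 t ht
    constructor <;> · norm_num [Nat.factorial]; linarith
  | succ n ih =>
    intro z t ht hsum
    have hF0 := hpos 0 t ht
    have hFz := hpos z t ht
    obtain ⟨i, -, hz⟩ : ∃ i ∈ Finset.univ, z i ≠ 0 :=
      Finset.exists_ne_zero_of_sum_ne_zero (by rw [hsum]; exact Nat.succ_ne_zero n)
    set w := Function.update z i (z i - 1) with hwdef
    have hw : (∑ j, w j) = n := by
      have h1 : ∑ j, w j = (z i - 1) + ∑ j ∈ Finset.univ \ {i}, z j :=
        Finset.sum_update_of_mem (Finset.mem_univ i) _ _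
      have h2 : z i + ∑ j ∈ Finset.univ \ {i}, z j = ∑ j, z j := by
        rw [Finset.sdiff_singleton_eq_erase]
        exact Finset.add_sum_erase _ _ (Finset.mem_univ i)
      omega
    have hFw := hpos w t ht
    have hupdate : Function.update w i (w i + 1) = z := by
      funext j
      rcases eq_or_ne j i with rfl | hj
      · simp only [hwdef, Function.update_self]
        omega
      · simp only [hwdef, Function.update_of_ne hj]
    have hwcast : (∑ j, (w j : ℝ)) = (n : ℝ) := by
      rw [← Nat.cast_sum, hw]
    have hzcast : (∑ j, (z j : ℝ)) = (n : ℝ) + 1 := by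
      rw [← Nat.cast_sum, hsum]; push_cast; ring
    have hfac : (((n + 3).factorial : ℕ) : ℝ) = ((n:ℝ) + 3) * ((n + 2).factorial : ℝ) := by
      have : (n + 3).factorial = (n + 3) * (n + 2).factorial := Nat.factorial_succ _
      rw [this]; push_cast; ring
    have hDn_pos : (0:ℝ) < K ^ n * ((n + 2).factorial : ℝ) := by positivity
    have hn0 : (0:ℝ) ≤ (n : ℝ) := Nat.cast_nonneg _
    obtain ⟨ih1, ih2⟩ := ih w t ht hw
    constructor
    · -- upper bound
      have hup := Fstep_up β f hβ hpos hineq w t ht i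
      rw [hupdate, hwcast] at hup
      have hA : 2 * (n:ℝ) + (∑ j, β j) ≤ β i * K * ((n:ℝ) + 3) := by
        nlinarith [hKβ i, hβ i]
      have u1 : β i * Ffun β f z t ≤
          (2 * (n:ℝ) + ∑ j, β j) * ((K ^ n * ((n + 2).factorial : ℝ)) * Ffun β f 0 t) := by
        refine le_trans hup (mul_le_mul_of_nonneg_left ih1 (by linarith))
      have u3 : β i * Ffun β f z t ≤
          β i * (K ^ (n+1) * (((n + 1) + 2).factorial : ℝ) * Ffun β f 0 t) := by
        have e : β i * (K ^ (n+1) * (((n + 1) + 2).factorial : ℝ) * Ffun β f 0 t) =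
            (β i * K * ((n:ℝ) + 3)) * ((K ^ n * ((n + 2).factorial : ℝ)) * Ffun β f 0 t) := by
          have e2 : ((n:ℕ) + 1) + 2 = n + 3 := by ring
          rw [e2, hfac, pow_succ]; ring
        rw [e]
        refine le_trans u1 (mul_le_mul_of_nonneg_right hA (by positivity))
      exact le_of_mul_le_mul_left u3 (hβ i)
    · -- lower bound
      have hdown := Fstep_down β f hβ hpos hineq z t ht i hz
      rw [hzcast] at hdown
      have hA2 : 2 * ((n:ℝ) + 1) + (∑ j, β j) ≤ K * ((n:ℝ) + 3) := by
        nlinarith [hK2]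
      have l1 : Ffun β f 0 t ≤ (K ^ n * ((n + 2).factorial : ℝ)) *
          ((2 * ((n:ℝ)+1) + ∑ j, β j) * Ffun β f z t) :=
        le_trans ih2 (mul_le_mul_of_nonneg_left hdown hDn_pos.le)
      have e : K ^ (n+1) * (((n + 1) + 2).factorial : ℝ) * Ffun β f z t =
          (K ^ n * ((n + 2).factorial : ℝ)) * ((K * ((n:ℝ) + 3)) * Ffun β f z t) := by
        have e2 : ((n:ℕ) + 1) + 2 = n + 3 := by ring
        rw [e2, hfac, pow_succ]; ring
      rw [e]
      refine le_trans l1 (mul_le_mul_of_nonneg_left ?_ hDn_pos.le)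
      exact mul_le_mul_of_nonneg_right hA2 hFz.le

lemma posOrthant_measurable : MeasurableSet (posOrthant d) := by
  have : posOrthant d = ⋂ i, {lam : Fin d → ℝ | 0 < lam i} := by
    ext x; simp [posOrthant, Set.mem_iInter]
  rw [this]
  exact MeasurableSet.iInter fun i =>
    measurableSet_lt measurable_const (measurable_pi_apply i)

lemma Fcmp (hβ : ∀ i, 0 < β i) (hf_nonneg : ∀ θ, 0 ≤ f θ)
    (hfin : ∀ (z : Fin d → ℕ) (t : ℝ), 0 < t →
      IntegrableOn (Fintegrand β f z t) (posOrthant d))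
    (s t : ℝ) (hs : 0 < s) (hst : s ≤ t) :
    Ffun β f 0 t ≤ (t/s) ^ (∑ i, β i) * Ffun β f 0 s := by
  have ht : 0 < t := lt_of_lt_of_le hs hst
  have hts : 0 < t / s := div_pos ht hs
  unfold Ffun
  rw [← integral_const_mul]
  refine setIntegral_mono_on (hfin 0 t ht) ((hfin 0 s hs).const_mul _)
    posOrthant_measurable ?_
  intro lam hlam
  unfold Fintegrand
  simp only [Pi.zero_apply, Nat.cast_zero, zero_add]
  rw [mul_left_comm]
  refine mul_le_mul_of_nonneg_left ?_ (hf_nonneg _)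
  rw [Real.rpow_sum_of_pos hts, ← Finset.prod_mul_distrib]
  refine Finset.prod_le_prod (fun i _ => ?_) (fun i _ => ?_)
  · have hΓ := Real.Gamma_pos_of_pos (hβ i)
    have hlami := hlam i
    positivity
  · have hΓ := Real.Gamma_pos_of_pos (hβ i)
    have hlami := hlam i
    have key : (t/s) ^ (β i) * s ^ (β i) = t ^ (β i) := by
      rw [← Real.mul_rpow hts.le hs.le, div_mul_cancel₀ _ (ne_of_gt hs)]
    have e : (t/s) ^ (β i) * (s ^ (β i) * lam i ^ (β i - 1) * Real.exp (-(s * lam i)) /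
          Real.Gamma (β i)) =
        t ^ (β i) * lam i ^ (β i - 1) * Real.exp (-(s * lam i)) / Real.Gamma (β i) := by
      rw [← key]; ring
    rw [e]
    gcongr

lemma poly_le (L K : ℝ) (n : ℕ) (hL : 0 ≤ L) (hK : 2 ≤ K) :
    (L + (n:ℝ) * K + ((n:ℝ) + 2)^2) * ((n:ℝ) + 1) ≤ 2 * (L + K + 16) * 16 ^ n := by
  have hp : ((n:ℝ)) ≤ 2 ^ n := by exact_mod_cast n.lt_two_pow_self.le
  have hp1 : (1:ℝ) ≤ 2 ^ n := by exact_mod_cast Nat.one_le_two_pow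
  have h16 : (16:ℝ) ^ n = ((2:ℝ) ^ n) ^ 4 := by
    rw [← pow_mul, mul_comm, pow_mul]; norm_num
  set p := (2:ℝ) ^ n with hpdef
  have hn0 : (0:ℝ) ≤ (n:ℝ) := Nat.cast_nonneg _
  have hp2 : (1:ℝ) ≤ p ^ 2 := by nlinarith
  have hnp2 : (n:ℝ) ≤ p ^ 2 := by nlinarith
  have a1 : L ≤ L * p ^ 2 := le_mul_of_one_le_right hL hp2
  have a2 : (n:ℝ) * K ≤ K * p ^ 2 := by nlinarith
  have h32 : (n:ℝ) + 2 ≤ 3 * p := by linarith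
  have a3 : ((n:ℝ) + 2)^2 ≤ 16 * p ^ 2 := by nlinarith [sq_nonneg p]
  have a4 : ((n:ℝ) + 1) ≤ 2 * p ^ 2 := by nlinarith
  have sum_le : L + (n:ℝ) * K + ((n:ℝ) + 2)^2 ≤ (L + K + 16) * p ^ 2 := by nlinarith
  calc (L + (n:ℝ) * K + ((n:ℝ) + 2)^2) * ((n:ℝ) + 1)
      ≤ ((L + K + 16) * p ^ 2) * (2 * p ^ 2) := by
        refine mul_le_mul sum_le a4 (by linarith) ?_
        nlinarith
    _ = 2 * (L + K + 16) * p ^ 4 := by ring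
    _ = 2 * (L + K + 16) * 16 ^ n := by rw [h16]

lemma logD_le (K : ℝ) (hK0 : 0 < K) (hKge2 : 2 ≤ K) (n : ℕ) :
    Real.log (K ^ n * ((n+2).factorial : ℝ)) ≤ (n:ℝ)*K + ((n:ℝ)+2)^2 := by
  have hKnpos : (0:ℝ) < K ^ n := by positivity
  have hn0 : (0:ℝ) ≤ (n:ℝ) := Nat.cast_nonneg _
  rw [Real.log_mul (ne_of_gt hKnpos) (by positivity), Real.log_pow]
  have t1 : (n:ℝ) * Real.log K ≤ (n:ℝ) * K :=
    mul_le_mul_of_nonneg_left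
      (le_trans (Real.log_le_sub_one_of_pos hK0) (by linarith)) hn0
  have hle : ((n+2).factorial : ℝ) ≤ ((n:ℝ)+2) ^ (n+2) := by
    exact_mod_cast Nat.factorial_le_pow (n+2)
  have t2 : Real.log ((n+2).factorial : ℝ) ≤ ((n:ℝ)+2)^2 := by
    have l1 : Real.log ((n+2).factorial : ℝ) ≤ Real.log (((n:ℝ)+2) ^ (n+2)) :=
      Real.log_le_log (by positivity) hle
    rw [Real.log_pow] at l1
    have l2 : Real.log ((n:ℝ)+2) ≤ (n:ℝ)+2 :=
      le_trans (Real.log_le_sub_one_of_pos (by positivity)) (by linarith)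
    have l3 : ((n+2:ℕ):ℝ) * Real.log ((n:ℝ)+2) ≤ ((n:ℝ)+2) * ((n:ℝ)+2) := by
      push_cast
      have h0 : (0:ℝ) ≤ (n:ℝ) + 2 := by linarith
      nlinarith [Real.log_nonneg (show (1:ℝ) ≤ (n:ℝ)+2 by linarith)]
    nlinarith
  linarith

lemma real_bound (L0 K r : ℝ) (hL0 : 0 ≤ L0) (hKge2 : 2 ≤ K) (hr : 0 < r)
    {d : ℕ} (lam : Fin d → ℝ) (hlam' : ∀ i, 0 < lam i) (z : Fin d → ℕ) (t : ℝ)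
    (h1 : r/2 ≤ t) (h2 : t ≤ 3*r/2) (a : ℝ)
    (ha : |a| ≤ L0 + ((∑ i, z i : ℕ):ℝ)*K + (((∑ i, z i : ℕ):ℝ)+2)^2) :
    |a| * ((∑ i, (z i : ℝ)) + 1) *
      ∏ i, (t*lam i)^(z i) * Real.exp (-(t*lam i)) / ((z i).factorial:ℝ)
    ≤ 2*(L0+K+16) * ∏ i, (32*r*lam i)^(z i)/((z i).factorial:ℝ) := by
  have ht0 : 0 < t := by linarith
  have hK0 : 0 < K := by linarith
  have hcast : (∑ i, (z i : ℝ)) = ((∑ i, z i : ℕ) : ℝ) := by rw [Nat.cast_sum]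
  have hP : ∏ i, (t*lam i)^(z i) * Real.exp (-(t*lam i)) / ((z i).factorial:ℝ)
      ≤ ∏ i, (2*r*lam i)^(z i) / ((z i).factorial : ℝ) := by
    refine Finset.prod_le_prod (fun i _ => by have := hlam' i; positivity)
      (fun i _ => ?_)
    have hli := hlam' i
    have hfp : (0:ℝ) < ((z i).factorial : ℝ) := by exact_mod_cast (z i).factorial_pos
    have hnum : (t*lam i)^(z i) * Real.exp (-(t*lam i)) ≤ (2*r*lam i)^(z i) := by
      have e1 : Real.exp (-(t*lam i)) ≤ 1 := Real.exp_le_one_iff.mpr (by nlinarith)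
      have e2 : (t*lam i)^(z i) ≤ (2*r*lam i)^(z i) := by
        apply pow_le_pow_left₀ (by positivity) (by nlinarith)
      calc (t*lam i)^(z i) * Real.exp (-(t*lam i))
          ≤ (t*lam i)^(z i) * 1 := mul_le_mul_of_nonneg_left e1 (by positivity)
        _ = (t*lam i)^(z i) := mul_one _
        _ ≤ _ := e2
    exact (div_le_div_iff_of_pos_right hfp).mpr hnum
  have hMnonneg : (0:ℝ) ≤ L0 + ((∑ i, z i : ℕ):ℝ)*K + (((∑ i, z i : ℕ):ℝ)+2)^2 :=
    add_nonneg (add_nonneg hL0 (mul_nonneg (Nat.cast_nonneg _) hK0.le)) (sq_nonneg _)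
  have hPnonneg : (0:ℝ) ≤
      ∏ i, (t*lam i)^(z i) * Real.exp (-(t*lam i)) / ((z i).factorial:ℝ) :=
    Finset.prod_nonneg fun i _ => by have := hlam' i; positivity
  have hpoly := poly_le L0 K (∑ i, z i) hL0 hKge2
  have hn1 : (0:ℝ) ≤ ((∑ i, z i : ℕ):ℝ) + 1 := by positivity
  have step1 : |a| * ((∑ i, (z i : ℝ)) + 1) ≤
      (L0 + ((∑ i, z i : ℕ):ℝ)*K + (((∑ i, z i : ℕ):ℝ)+2)^2) * (((∑ i, z i : ℕ):ℝ)+1) := by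
    rw [hcast]
    exact mul_le_mul_of_nonneg_right ha hn1
  have e16 : (16:ℝ)^(∑ i, z i) * ∏ i, (2*r*lam i)^(z i)/((z i).factorial:ℝ)
      = ∏ i, (32*r*lam i)^(z i)/((z i).factorial:ℝ) := by
    rw [← Finset.prod_pow_eq_pow_sum, ← Finset.prod_mul_distrib]
    refine Finset.prod_congr rfl fun i _ => ?_
    rw [← mul_div_assoc, ← mul_pow]
    have : (16:ℝ)*(2*r*lam i) = 32*r*lam i := by ring
    rw [this]
  have hQ2 : (0:ℝ) ≤ ∏ i, (2*r*lam i)^(z i) / ((z i).factorial : ℝ) :=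
    Finset.prod_nonneg fun i _ => by have := hlam' i; positivity
  calc |a| * ((∑ i, (z i : ℝ)) + 1) *
        ∏ i, (t * lam i) ^ (z i) * Real.exp (-(t * lam i)) / ((z i).factorial : ℝ)
      ≤ ((L0 + ((∑ i, z i : ℕ):ℝ)*K + (((∑ i, z i : ℕ):ℝ)+2)^2) * (((∑ i, z i : ℕ):ℝ)+1)) *
        ∏ i, (2*r*lam i)^(z i) / ((z i).factorial : ℝ) := by
        refine mul_le_mul step1 hP hPnonneg ?_
        exact mul_nonneg hMnonneg hn1
    _ ≤ (2*(L0+K+16) * 16^(∑ i, z i)) *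
        ∏ i, (2*r*lam i)^(z i) / ((z i).factorial : ℝ) :=
        mul_le_mul_of_nonneg_right hpoly hQ2
    _ = 2*(L0+K+16) * ∏ i, (32*r*lam i)^(z i) / ((z i).factorial : ℝ) := by
        rw [mul_assoc, e16]

lemma pi_tsum_prod : ∀ (d : ℕ) (g : Fin d → ℕ → ENNReal),
    ∑' z : Fin d → ℕ, ∏ i, g i (z i) = ∏ i, ∑' k, g i k := by
  intro d
  induction d with
  | zero =>
    intro g
    simp only [Finset.univ_eq_empty, Finset.prod_empty]
    rw [tsum_eq_single (fun i => 0) (by intro b hb; exact absurd (funext fun i => i.elim0) hb)]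
  | succ n ih =>
    intro g
    rw [← (Fin.consEquiv (fun _ : Fin (n+1) => ℕ)).tsum_eq
      (fun z => ∏ i, g i (z i))]
    have key : ∀ p : ℕ × (Fin n → ℕ),
        (∏ i, g i ((Fin.consEquiv (fun _ : Fin (n+1) => ℕ)) p i)) =
        g 0 p.1 * ∏ i, g i.succ (p.2 i) := by
      intro p
      simp [Fin.consEquiv, Fin.prod_univ_succ]
    calc ∑' p : ℕ × (Fin n → ℕ), (∏ i, g i ((Fin.consEquiv (fun _ : Fin (n+1) => ℕ)) p i))
        = ∑' p : ℕ × (Fin n → ℕ), g 0 p.1 * ∏ i, g i.succ (p.2 i) := tsum_congr key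
      _ = ∑' (a : ℕ) (b : Fin n → ℕ), g 0 a * ∏ i, g i.succ (b i) := by
          exact ENNReal.tsum_prod'
      _ = ∑' (a : ℕ), g 0 a * ∑' b : Fin n → ℕ, ∏ i, g i.succ (b i) := by
          exact tsum_congr fun a => ENNReal.tsum_mul_left
      _ = (∑' k, g 0 k) * ∑' b : Fin n → ℕ, ∏ i, g i.succ (b i) := ENNReal.tsum_mul_right
      _ = ∏ i, ∑' k, g i k := by rw [ih, Fin.prod_univ_succ]

theorem summability_of_log_F'
    (d : ℕ) (hd : 1 ≤ d) (β : Fin d → ℝ) (hβ : ∀ i, 0 < β i)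
    (f : (Fin d → ℝ) → ℝ) (hf_nonneg : ∀ θ, 0 ≤ f θ)
    (hfin : ∀ (z : Fin d → ℕ) (t : ℝ), 0 < t →
      IntegrableOn (Fintegrand β f z t) (posOrthant d))
    (hpos : ∀ (z : Fin d → ℕ) (t : ℝ), 0 < t → 0 < Ffun β f z t)
    (hineq : ∀ (z : Fin d → ℕ) (t : ℝ), 0 < t →
      0 ≤ ∑ i, (z i : ℝ) * (Ffun β f z t - FfunDown β f z t i) +
          ∑ i, ((z i : ℝ) + β i) *
            (Ffun β f z t - Ffun β f (Function.update z i (z i + 1)) t)) :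
    ∀ (r : ℝ), 0 < r → ∀ lam ∈ posOrthant d,
      ∃ ε > (0 : ℝ),
        (∑' z : Fin d → ℕ,
          ⨆ t ∈ Set.Icc (r - ε) (r + ε),
            ENNReal.ofReal (|Real.log (Ffun β f z t)| * ((∑ i, (z i : ℝ)) + 1) *
              ∏ i, (t * lam i) ^ (z i) * Real.exp (-(t * lam i)) / (Nat.factorial (z i))))
          < ⊤ ∧
        (∑' z : Fin d → ℕ,
          ENNReal.ofReal (|Real.log (Ffun β f z r)| *
            ∏ i, (r * lam i) ^ (z i) * Real.exp (-(r * lam i)) / (Nat.factorial (z i))))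
          < ⊤ := by
  intro r hr lam hlam
  have hi0 : (Finset.univ : Finset (Fin d)).Nonempty := ⟨⟨0, hd⟩, Finset.mem_univ _⟩
  set B := ∑ i, β i with hBdef
  have hB0 : (0:ℝ) ≤ B := Finset.sum_nonneg fun i _ => (hβ i).le
  set m := min 1 (Finset.univ.inf' hi0 β) with hmdef
  have hm0 : 0 < m := lt_min one_pos (by rw [Finset.lt_inf'_iff]; exact fun i _ => hβ i)
  have hm1 : m ≤ 1 := min_le_left _ _
  have hmβ : ∀ i, m ≤ β i := fun i =>
    le_trans (min_le_right _ _) (Finset.inf'_le β (Finset.mem_univ i))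
  set K := (2 + B) / m with hKdef
  have hmK : m * K = 2 + B := by
    rw [hKdef]; field_simp
  have hK0 : 0 < K := by rw [hKdef]; positivity
  have hK2 : 2 + B ≤ K := by
    rw [hKdef, le_div_iff₀ hm0]; nlinarith
  have hKβ : ∀ i, 2 + B ≤ β i * K := fun i => by nlinarith [hmβ i, hK0.le]
  have hKge2 : (2:ℝ) ≤ K := by linarith
  have sandwich := Fsandwich β f hβ hpos hineq K hK2 hKβ
  clear_value m K
  have hr2 : 0 < r/2 := by linarith
  have h2r : 0 < 2*r := by linarith
  set L0 := B * Real.log 4 + |Real.log (Ffun β f 0 (r/2))| + |Real.log (Ffun β f 0 (2*r))|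
    with hL0def
  have hlog4 : 0 ≤ Real.log 4 := Real.log_nonneg (by norm_num)
  have hL0 : 0 ≤ L0 := by
    have := abs_nonneg (Real.log (Ffun β f 0 (r/2)))
    have := abs_nonneg (Real.log (Ffun β f 0 (2*r)))
    have : 0 ≤ B * Real.log 4 := mul_nonneg hB0 hlog4
    rw [hL0def]; positivity
  -- uniform bound on |log F(0,t)|
  have hF0bound : ∀ t, r/2 ≤ t → t ≤ 3*r/2 → |Real.log (Ffun β f 0 t)| ≤ L0 := by
    intro t h1 h2
    have ht : 0 < t := lt_of_lt_of_le hr2 h1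
    have hFt := hpos 0 t ht
    have hFr2 := hpos 0 (r/2) hr2
    have hF2r := hpos 0 (2*r) h2r
    have hup := Fcmp β f hβ hf_nonneg hfin (r/2) t hr2 h1
    have hdown := Fcmp β f hβ hf_nonneg hfin t (2*r) ht (by linarith)
    rw [← hBdef] at hup hdown
    have habs1 : (0:ℝ) ≤ |Real.log (Ffun β f 0 (r/2))| := abs_nonneg _
    have habs2 : (0:ℝ) ≤ |Real.log (Ffun β f 0 (2*r))| := abs_nonneg _
    have hq1 : (0:ℝ) < t/(r/2) := by positivity
    have hq2 : (0:ℝ) < (2*r)/t := by positivity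
    rw [abs_le]
    constructor
    · have l1 : Real.log (Ffun β f 0 (2*r)) ≤
          Real.log (((2*r)/t) ^ B * Ffun β f 0 t) := Real.log_le_log hF2r hdown
      rw [Real.log_mul (by positivity) (ne_of_gt hFt), Real.log_rpow hq2] at l1
      have l2 : Real.log ((2*r)/t) ≤ Real.log 4 :=
        Real.log_le_log hq2 (by rw [div_le_iff₀ ht]; linarith)
      have l3 : B * Real.log ((2*r)/t) ≤ B * Real.log 4 :=
        mul_le_mul_of_nonneg_left l2 hB0
      have l4 : -|Real.log (Ffun β f 0 (2*r))| ≤ Real.log (Ffun β f 0 (2*r)) :=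
        neg_abs_le _
      rw [hL0def]; linarith
    · have u1 : Real.log (Ffun β f 0 t) ≤
          Real.log ((t/(r/2)) ^ B * Ffun β f 0 (r/2)) := Real.log_le_log hFt hup
      rw [Real.log_mul (by positivity) (ne_of_gt hFr2), Real.log_rpow hq1] at u1
      have u2 : Real.log (t/(r/2)) ≤ Real.log 4 :=
        Real.log_le_log hq1 (by rw [div_le_iff₀ hr2]; linarith)
      have u3 : B * Real.log (t/(r/2)) ≤ B * Real.log 4 :=
        mul_le_mul_of_nonneg_left u2 hB0
      have u4 : Real.log (Ffun β f 0 (r/2)) ≤ |Real.log (Ffun β f 0 (r/2))| :=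
        le_abs_self _
      rw [hL0def]; linarith
  -- per-z log bound
  have hlogz : ∀ (z : Fin d → ℕ) (t : ℝ), r/2 ≤ t → t ≤ 3*r/2 →
      |Real.log (Ffun β f z t)| ≤
        L0 + ((∑ i, z i : ℕ):ℝ) * K + (((∑ i, z i : ℕ):ℝ) + 2)^2 := by
    intro z t h1 h2
    have ht : 0 < t := lt_of_lt_of_le hr2 h1
    set n := ∑ i, z i with hndef
    obtain ⟨s1, s2⟩ := sandwich n z t ht rfl
    clear_value n
    have hFt := hpos z t ht
    have hF0 := hpos 0 t ht
    have hKn : (1:ℝ) ≤ K ^ n := by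
      calc (1:ℝ) = 1 ^ n := (one_pow n).symm
        _ ≤ K ^ n := pow_le_pow_left₀ zero_le_one (by linarith) n
    have hfac1 : (1:ℝ) ≤ ((n+2).factorial : ℝ) := by
      exact_mod_cast Nat.one_le_iff_ne_zero.mpr (Nat.factorial_ne_zero _)
    have hKnpos : (0:ℝ) < K ^ n := by positivity
    have hDpos : (0:ℝ) < K ^ n * ((n+2).factorial : ℝ) := by positivity
    have hD1 : (1:ℝ) ≤ K ^ n * ((n+2).factorial : ℝ) := by nlinarith
    have hn0 : (0:ℝ) ≤ (n:ℝ) := Nat.cast_nonneg _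
    have hlogD : Real.log (K ^ n * ((n+2).factorial : ℝ)) ≤ (n:ℝ)*K + ((n:ℝ)+2)^2 :=
      logD_le K hK0 hKge2 n
    have habs0 := hF0bound t h1 h2
    have hs1' : Real.log (Ffun β f z t) ≤
        Real.log (K ^ n * ((n+2).factorial : ℝ)) + Real.log (Ffun β f 0 t) := by
      have := Real.log_le_log hFt s1
      rwa [Real.log_mul (ne_of_gt hDpos) (ne_of_gt hF0)] at this
    have hs2' : Real.log (Ffun β f 0 t) ≤
        Real.log (K ^ n * ((n+2).factorial : ℝ)) + Real.log (Ffun β f z t) := by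
      have := Real.log_le_log hF0 s2
      rwa [Real.log_mul (ne_of_gt hDpos) (ne_of_gt hFt)] at this
    rw [abs_le] at habs0 ⊢
    constructor
    · linarith [habs0.1]
    · linarith [habs0.2]
  clear_value B L0
  have hlam' : ∀ i, 0 < lam i := hlam
  set C := 2*(L0 + K + 16) with hCdef
  have hC0 : (0:ℝ) ≤ C := by rw [hCdef]; nlinarith
  have hQ : ∀ z : Fin d → ℕ,
      (0:ℝ) ≤ ∏ i, (32*r*lam i)^(z i) / ((z i).factorial : ℝ) :=
    fun z => Finset.prod_nonneg fun i _ => by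
      have := hlam' i; positivity
  -- main real bound
  have hreal : ∀ (z : Fin d → ℕ) (t : ℝ), t ∈ Set.Icc (r - r/2) (r + r/2) →
      |Real.log (Ffun β f z t)| * ((∑ i, (z i : ℝ)) + 1) *
        ∏ i, (t * lam i) ^ (z i) * Real.exp (-(t * lam i)) / ((z i).factorial : ℝ)
      ≤ C * ∏ i, (32*r*lam i)^(z i) / ((z i).factorial : ℝ) := by
    intro z t ht
    have h1 : r/2 ≤ t := by have := ht.1; linarith
    have h2 : t ≤ 3*r/2 := by have := ht.2; linarith
    rw [hCdef]
    exact real_bound L0 K r hL0 hKge2 hr lam hlam' z t h1 h2 _ (hlogz z t h1 h2)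
  have hsup : ∀ z : Fin d → ℕ,
      (⨆ t ∈ Set.Icc (r - r/2) (r + r/2),
        ENNReal.ofReal (|Real.log (Ffun β f z t)| * ((∑ i, (z i : ℝ)) + 1) *
          ∏ i, (t * lam i) ^ (z i) * Real.exp (-(t * lam i)) / (Nat.factorial (z i))))
      ≤ ENNReal.ofReal (C * ∏ i, (32*r*lam i)^(z i) / ((z i).factorial : ℝ)) :=
    fun z => iSup₂_le fun t ht => ENNReal.ofReal_le_ofReal (hreal z t ht)
  have htail : ∑' z : Fin d → ℕ,
      ENNReal.ofReal (C * ∏ i, (32*r*lam i)^(z i)/((z i).factorial:ℝ)) < ⊤ := by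
    have heq : ∀ z : Fin d → ℕ,
        ENNReal.ofReal (C * ∏ i, (32*r*lam i)^(z i)/((z i).factorial:ℝ))
        = ENNReal.ofReal C *
          ∏ i, ENNReal.ofReal ((32*r*lam i)^(z i)/((z i).factorial:ℝ)) := by
      intro z
      rw [ENNReal.ofReal_mul hC0,
        ENNReal.ofReal_prod_of_nonneg (fun i _ => by have := hlam' i; positivity)]
    rw [tsum_congr heq, ENNReal.tsum_mul_left,
      pi_tsum_prod d (fun i k => ENNReal.ofReal ((32*r*lam i)^k/(k.factorial:ℝ)))]
    refine ENNReal.mul_lt_top ENNReal.ofReal_lt_top (ENNReal.prod_lt_top fun i _ => ?_)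
    rw [← ENNReal.ofReal_tsum_of_nonneg (fun k => by have := hlam' i; positivity)
      (Real.summable_pow_div_factorial _)]
    exact ENNReal.ofReal_lt_top
  have hmain : (∑' z : Fin d → ℕ,
      ⨆ t ∈ Set.Icc (r - r/2) (r + r/2),
        ENNReal.ofReal (|Real.log (Ffun β f z t)| * ((∑ i, (z i : ℝ)) + 1) *
          ∏ i, (t * lam i) ^ (z i) * Real.exp (-(t * lam i)) / (Nat.factorial (z i)))) < ⊤ :=
    lt_of_le_of_lt (ENNReal.tsum_le_tsum hsup) htail
  refine ⟨r/2, hr2, hmain, ?_⟩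
  refine lt_of_le_of_lt (ENNReal.tsum_le_tsum fun z => ?_) hmain
  have hrmem : r ∈ Set.Icc (r - r/2) (r + r/2) := ⟨by linarith, by linarith⟩
  refine le_trans ?_ (le_biSup _ hrmem)
  apply ENNReal.ofReal_le_ofReal
  have hprod : (0:ℝ) ≤
      ∏ i, (r*lam i)^(z i) * Real.exp (-(r*lam i))/((z i).factorial:ℝ) :=
    Finset.prod_nonneg fun i _ => by have := hlam' i; positivity
  have h1n : (1:ℝ) ≤ (∑ i, (z i:ℝ)) + 1 := by
    have : (0:ℝ) ≤ ∑ i, (z i : ℝ) := Finset.sum_nonneg fun i _ => Nat.cast_nonneg _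
    linarith
  calc |Real.log (Ffun β f z r)| *
        ∏ i, (r * lam i) ^ (z i) * Real.exp (-(r * lam i)) / ((z i).factorial : ℝ)
      = |Real.log (Ffun β f z r)| * 1 *
        ∏ i, (r * lam i) ^ (z i) * Real.exp (-(r * lam i)) / ((z i).factorial : ℝ) := by
        rw [mul_one]
    _ ≤ |Real.log (Ffun β f z r)| * ((∑ i, (z i:ℝ)) + 1) *
        ∏ i, (r * lam i) ^ (z i) * Real.exp (-(r * lam i)) / ((z i).factorial : ℝ) :=
        mul_le_mul_of_nonneg_right
          (mul_le_mul_of_nonneg_left h1n (abs_nonneg _)) hprod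


theorem summability_of_log_F
    (d : ℕ) (hd : 1 ≤ d) (β : Fin d → ℝ) (hβ : ∀ i, 0 < β i)
    (f : (Fin d → ℝ) → ℝ) (hf_nonneg : ∀ θ, 0 ≤ f θ)
    -- for every z and t > 0, F(z,t) is finite
    (hfin : ∀ (z : Fin d → ℕ) (t : ℝ), 0 < t →
      IntegrableOn (Fintegrand β f z t) (posOrthant d))
    -- and positive
    (hpos : ∀ (z : Fin d → ℕ) (t : ℝ), 0 < t → 0 < Ffun β f z t)
    -- and the inequality holds
    (hineq : ∀ (z : Fin d → ℕ) (t : ℝ), 0 < t →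
      0 ≤ ∑ i, (z i : ℝ) * (Ffun β f z t - FfunDown β f z t i) +
          ∑ i, ((z i : ℝ) + β i) *
            (Ffun β f z t - Ffun β f (Function.update z i (z i + 1)) t)) :
    ∀ (r : ℝ), 0 < r → ∀ lam ∈ posOrthant d,
      ∃ ε > (0 : ℝ),
        (∑' z : Fin d → ℕ,
          ⨆ t ∈ Set.Icc (r - ε) (r + ε),
            ENNReal.ofReal (|Real.log (Ffun β f z t)| * ((∑ i, (z i : ℝ)) + 1) *
              ∏ i, (t * lam i) ^ (z i) * Real.exp (-(t * lam i)) / (Nat.factorial (z i))))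
          < ⊤ ∧
        (∑' z : Fin d → ℕ,
          ENNReal.ofReal (|Real.log (Ffun β f z r)| *
            ∏ i, (r * lam i) ^ (z i) * Real.exp (-(r * lam i)) / (Nat.factorial (z i))))
          < ⊤ := by
  exact summability_of_log_F' d hd β hβ f hf_nonneg hfin hpos hineq
end
end

section
/- Define g(λ) = Σ_{x=0}^∞ log((x+1.5)/(x+0.5)) · e^{−λ}λ^x/x! − 1/λ for λ > 0. Then for every λ > 0, 0.09·e^{−λ} − e^{−λ}/λ < g(λ) < 0.06·e^{−λ} − e^{−λ}/λ + 0.26/λ³. -/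
open Real Filter


lemma artanh_deriv (t : ℝ) (h0 : 0 < 1 + t) (h1 : 0 < 1 - t) :
    HasDerivAt (fun u => Real.log (1 + u) - Real.log (1 - u))
      ((1 + t)⁻¹ + (1 - t)⁻¹) t := by
  have ha : HasDerivAt (fun u : ℝ => Real.log (1 + u)) (1/(1+t)) t := by
    have := (Real.hasDerivAt_log h0.ne').comp t ((hasDerivAt_id t).const_add 1)
    exact this.congr_deriv (by simp [one_div])
  have hb : HasDerivAt (fun u : ℝ => Real.log (1 - u)) (-(1/(1-t))) t := by
    have := (Real.hasDerivAt_log h1.ne').comp t ((hasDerivAt_id t).const_sub 1)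
    exact this.congr_deriv (by simp [one_div])
  exact (ha.sub hb).congr_deriv (by simp [one_div])

lemma key_low (s : ℝ) (h0 : 0 ≤ s) (h1 : s < 1) :
    2*s + 2*s^3/3 + 2*s^5/5 ≤ Real.log ((1+s)/(1-s)) := by
  set F : ℝ → ℝ := fun u => Real.log (1+u) - Real.log (1-u) - (2*u + 2*u^3/3 + 2*u^5/5) with hF
  have hd : ∀ t ∈ Set.Icc (0:ℝ) s, HasDerivAt F (2*t^6/((1+t)*(1-t))) t := by
    intro t ht
    have ht0 : 0 ≤ t := ht.1
    have ht1 : t < 1 := lt_of_le_of_lt ht.2 h1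
    have hp1 : (0:ℝ) < 1 + t := by linarith
    have hp2 : (0:ℝ) < 1 - t := by linarith
    have hpoly : HasDerivAt (fun u : ℝ => 2*u + 2*u^3/3 + 2*u^5/5) (2 + 2*t^2 + 2*t^4) t := by
      have h1' := hasDerivAt_id t
      have h3 := hasDerivAt_pow 3 t
      have h5 := hasDerivAt_pow 5 t
      refine (((h1'.const_mul 2).add ((h3.const_mul 2).div_const 3)).add
        ((h5.const_mul 2).div_const 5)).congr_deriv ?_
      push_cast
      ring
    have := (artanh_deriv t hp1 hp2).sub hpoly
    refine this.congr_deriv ?_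
    field_simp
    ring
  have hmono : MonotoneOn F (Set.Icc 0 s) := by
    apply monotoneOn_of_deriv_nonneg (convex_Icc 0 s)
    · exact fun t ht => (hd t ht).continuousAt.continuousWithinAt
    · intro t ht
      rw [interior_Icc] at ht
      exact (hd t (Set.mem_Icc_of_Ioo ht)).differentiableAt.differentiableWithinAt
    · intro t ht
      rw [interior_Icc] at ht
      rw [(hd t (Set.mem_Icc_of_Ioo ht)).deriv]
      have ht1 : t < 1 := lt_of_lt_of_le ht.2 h1.le
      have : (0:ℝ) < (1+t)*(1-t) := by nlinarith [ht.1]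
      positivity
  have h0F : F 0 = 0 := by simp [hF]
  have := hmono (Set.left_mem_Icc.2 h0) (Set.right_mem_Icc.2 h0) h0
  rw [h0F] at this
  have hlog : Real.log ((1+s)/(1-s)) = Real.log (1+s) - Real.log (1-s) :=
    Real.log_div (by linarith) (by linarith)
  rw [hlog]
  simp only [hF] at this
  linarith

lemma key_up (s : ℝ) (h0 : 0 ≤ s) (h1 : s < 1) :
    Real.log ((1+s)/(1-s)) ≤ 2*s + 2*s^3/3 + 2*s^5/(5*(1-s^2)) := by
  set F : ℝ → ℝ := fun u => 2*u + 2*u^3/3 + 2*u^5/(5*(1-u^2)) - (Real.log (1+u) - Real.log (1-u)) with hF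
  have hd : ∀ t ∈ Set.Icc (0:ℝ) s, HasDerivAt F (4*t^6/(5*((1+t)*(1-t))^2)) t := by
    intro t ht
    have ht0 : 0 ≤ t := ht.1
    have ht1 : t < 1 := lt_of_le_of_lt ht.2 h1
    have hp1 : (0:ℝ) < 1 + t := by linarith
    have hp2 : (0:ℝ) < 1 - t := by linarith
    have hden : (5*(1-t^2)) ≠ 0 := by nlinarith
    have hfrac : HasDerivAt (fun u : ℝ => 2*u^5/(5*(1-u^2)))
        ((10*t^4*(5*(1-t^2)) - 2*t^5*(5*(-(2*t))))/(5*(1-t^2))^2) t := by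
      have hn : HasDerivAt (fun u : ℝ => 2*u^5) (10*t^4) t := by
        have := (hasDerivAt_pow 5 t).const_mul (2:ℝ)
        refine this.congr_deriv ?_; push_cast; ring
      have hdd : HasDerivAt (fun u : ℝ => 5*(1-u^2)) (5*(-(2*t))) t := by
        have := ((hasDerivAt_pow 2 t).const_sub 1).const_mul (5:ℝ)
        refine this.congr_deriv ?_; push_cast; ring
      exact hn.div hdd hden
    have hpoly : HasDerivAt (fun u : ℝ => 2*u + 2*u^3/3 + 2*u^5/(5*(1-u^2)))
        (2 + 2*t^2 + (10*t^4*(5*(1-t^2)) - 2*t^5*(5*(-(2*t))))/(5*(1-t^2))^2) t := by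
      have h1' := hasDerivAt_id t
      have h3 := hasDerivAt_pow 3 t
      have := ((h1'.const_mul 2).add ((h3.const_mul 2).div_const 3)).add hfrac
      refine this.congr_deriv ?_
      push_cast
      ring
    have := hpoly.sub (artanh_deriv t hp1 hp2)
    refine this.congr_deriv ?_
    have hne1 : (1:ℝ) - t^2 ≠ 0 := (by nlinarith : (0:ℝ) < 1 - t^2).ne'
    have hne2 : (1:ℝ) + t ≠ 0 := hp1.ne'
    have hne3 : (1:ℝ) - t ≠ 0 := hp2.ne'
    field_simp
    ring
  have hmono : MonotoneOn F (Set.Icc 0 s) := by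
    apply monotoneOn_of_deriv_nonneg (convex_Icc 0 s)
    · exact fun t ht => (hd t ht).continuousAt.continuousWithinAt
    · intro t ht
      rw [interior_Icc] at ht
      exact (hd t (Set.mem_Icc_of_Ioo ht)).differentiableAt.differentiableWithinAt
    · intro t ht
      rw [interior_Icc] at ht
      rw [(hd t (Set.mem_Icc_of_Ioo ht)).deriv]
      have ht1 : t < 1 := lt_of_lt_of_le ht.2 h1.le
      have : (0:ℝ) < (1+t)*(1-t) := by nlinarith [ht.1]
      positivity
  have h0F : F 0 = 0 := by simp [hF]
  have := hmono (Set.left_mem_Icc.2 h0) (Set.right_mem_Icc.2 h0) h0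
  rw [h0F] at this
  have hlog : Real.log ((1+s)/(1-s)) = Real.log (1+s) - Real.log (1-s) :=
    Real.log_div (by linarith) (by linarith)
  rw [hlog]
  simp only [hF] at this
  linarith


lemma exp_tsum (lam : ℝ) : ∑' n : ℕ, lam^n / (Nat.factorial n : ℝ) = Real.exp lam := by
  rw [Real.exp_eq_exp_ℝ, NormedSpace.exp_eq_tsum_div]

lemma strip (lam : ℝ) (k : ℕ) :
    ∑' x : ℕ, lam^(x+k) / (Nat.factorial (x+k) : ℝ) =
      Real.exp lam - ∑ i ∈ Finset.range k, lam^i / (Nat.factorial i : ℝ) := by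
  induction k with
  | zero => simpa using exp_tsum lam
  | succ k ih =>
    have hs : Summable (fun x : ℕ => lam^(x+k) / (Nat.factorial (x+k) : ℝ)) := by
      have := (Real.summable_pow_div_factorial lam).comp_injective
        (add_left_injective k)
      simpa [Function.comp_def] using this
    have h2 := hs.tsum_eq_zero_add
    rw [ih] at h2
    rw [Finset.sum_range_succ]
    have : ∀ x : ℕ, lam ^ (x + 1 + k) / (Nat.factorial (x + 1 + k) : ℝ)
        = lam ^ (x + (k+1)) / (Nat.factorial (x + (k+1)) : ℝ) := by
      intro x; rw [show x+1+k = x+(k+1) from by omega]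
    simp only [this] at h2
    simp only [zero_add] at h2
    linarith

lemma Sk (lam : ℝ) (hlam : 0 < lam) (k : ℕ) :
    Summable (fun x : ℕ => lam^x / (Nat.factorial (x+k) : ℝ)) := by
  have hs : Summable (fun x : ℕ => lam^(x+k) / (Nat.factorial (x+k) : ℝ)) := by
    have := (Real.summable_pow_div_factorial lam).comp_injective (add_left_injective k)
    simpa [Function.comp_def] using this
  refine (hs.mul_left ((lam^k)⁻¹)).congr fun x => ?_
  have h' : (Nat.factorial (x+k) : ℝ) ≠ 0 := by positivity
  field_simp [pow_add]
  ring

lemma T1 (lam : ℝ) (hlam : 0 < lam) :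
    ∑' x : ℕ, lam^x / (Nat.factorial (x+1) : ℝ) = (Real.exp lam - 1)/lam := by
  have h := strip lam 1
  have he : ∀ x : ℕ, lam^(x+1)/(Nat.factorial (x+1) : ℝ)
      = lam * (lam^x / (Nat.factorial (x+1):ℝ)) := by
    intro x; rw [pow_succ]; ring
  rw [tsum_congr he, tsum_mul_left] at h
  simp only [Finset.sum_range_one, pow_zero, Nat.factorial_zero, Nat.cast_one, div_one] at h
  rw [eq_div_iff hlam.ne']
  linarith

lemma T3 (lam : ℝ) (hlam : 0 < lam) :
    ∑' x : ℕ, lam^x / (Nat.factorial (x+3) : ℝ)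
      = (Real.exp lam - 1 - lam - lam^2/2)/lam^3 := by
  have h := strip lam 3
  have he : ∀ x : ℕ, lam^(x+3)/(Nat.factorial (x+3) : ℝ)
      = lam^3 * (lam^x / (Nat.factorial (x+3):ℝ)) := by
    intro x; rw [pow_add]; ring
  rw [tsum_congr he, tsum_mul_left] at h
  have hsum : ∑ i ∈ Finset.range 3, lam^i / (Nat.factorial i : ℝ) = 1 + lam + lam^2/2 := by
    simp [Finset.sum_range_succ, Nat.factorial]
  rw [hsum] at h
  have hl3 : lam^3 ≠ 0 := by positivity
  rw [eq_div_iff hl3]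
  linarith


lemma ratio_eq (x : ℕ) :
    ((x:ℝ)+1.5)/((x:ℝ)+0.5) = (1+1/(2*((x:ℝ)+1)))/(1-1/(2*((x:ℝ)+1))) := by
  have h1 : (0:ℝ) < (x:ℝ) + 0.5 := by positivity
  have h2 : (0:ℝ) < (x:ℝ) + 1 := by positivity
  have h3 : (0:ℝ) < 1 - 1/(2*((x:ℝ)+1)) := by
    rw [sub_pos, div_lt_one (by positivity)]; linarith
  rw [div_eq_div_iff h1.ne' h3.ne']
  field_simp
  ring

lemma s_bounds (x : ℕ) : 0 ≤ 1/(2*((x:ℝ)+1)) ∧ 1/(2*((x:ℝ)+1)) < 1 := by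
  constructor
  · positivity
  · rw [div_lt_one (by positivity)]
    have : (0:ℝ) ≤ (x:ℝ) := Nat.cast_nonneg x
    linarith

lemma L_lower (x : ℕ) : 1/((x:ℝ)+1) ≤ Real.log (((x:ℝ)+1.5)/((x:ℝ)+0.5)) := by
  set s := 1/(2*((x:ℝ)+1)) with hs
  obtain ⟨hs0, hs1⟩ := s_bounds x
  rw [ratio_eq x]
  have := key_low s hs0 hs1
  have h2 : 2*s = 1/((x:ℝ)+1) := by rw [hs]; field_simp
  nlinarith [pow_nonneg hs0 3, pow_nonneg hs0 5]

lemma L_nonneg (x : ℕ) : 0 ≤ Real.log (((x:ℝ)+1.5)/((x:ℝ)+0.5)) := by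
  apply Real.log_nonneg
  rw [le_div_iff₀ (by positivity)]
  linarith

lemma L_le_log3 (x : ℕ) : Real.log (((x:ℝ)+1.5)/((x:ℝ)+0.5)) ≤ Real.log 3 := by
  apply Real.log_le_log (by positivity)
  rw [div_le_iff₀ (by positivity)]
  have : (0:ℝ) ≤ (x:ℝ) := Nat.cast_nonneg x
  linarith

lemma L0_low : (263:ℝ)/240 ≤ Real.log 3 := by
  have h := key_low (1/2) (by norm_num) (by norm_num)
  have h3 : ((1:ℝ)+1/2)/(1-1/2) = 3 := by norm_num
  rw [h3] at h
  norm_num at h ⊢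
  linarith

lemma L0_up : Real.log 3 ≤ (11:ℝ)/10 := by
  have h := key_up (1/2) (by norm_num) (by norm_num)
  have h3 : ((1:ℝ)+1/2)/(1-1/2) = 3 := by norm_num
  rw [h3] at h
  norm_num at h ⊢
  linarith

lemma arith_u (u : ℝ) (hu2 : 2 ≤ u) :
    2*(1/(2*u)) + 2*(1/(2*u))^3/3 + 2*(1/(2*u))^5/(5*((4*u^2-1)/(4*u^2))) ≤
      1/u + 0.26/(u*(u+1)*(u+2)) := by
  have hu0 : (0:ℝ) < u := by linarith
  have h4u : (0:ℝ) < 4*u^2-1 := by nlinarith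
  have h4u' : (u^2*4-1 : ℝ) ≠ 0 := by nlinarith
  rw [← sub_nonneg]
  have key : 1/u + 0.26/(u*(u+1)*(u+2)) -
      (2*(1/(2*u)) + 2*(1/(2*u))^3/3 + 2*(1/(2*u))^5/(5*((4*u^2-1)/(4*u^2)))) =
      (u-2)*(212*u^3+124*u^2-20*u-10)/(300*u^3*(4*u^2-1)*(u+1)*(u+2)) := by
    field_simp
    ring
  rw [key]
  apply div_nonneg
  · have h1 : (0:ℝ) ≤ u - 2 := by linarith
    have h2 : (0:ℝ) ≤ 212*u^3+124*u^2-20*u-10 := by nlinarith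
    exact mul_nonneg h1 h2
  · positivity

lemma L_upper (x : ℕ) (hx : 1 ≤ x) :
    Real.log (((x:ℝ)+1.5)/((x:ℝ)+0.5)) ≤
      1/((x:ℝ)+1) + 0.26/(((x:ℝ)+1)*((x:ℝ)+2)*((x:ℝ)+3)) := by
  obtain ⟨hs0, hs1⟩ := s_bounds x
  rw [ratio_eq x]
  have hk := key_up (1/(2*((x:ℝ)+1))) hs0 hs1
  refine hk.trans ?_
  have hu2 : (2:ℝ) ≤ (x:ℝ)+1 := by
    have : (1:ℝ) ≤ (x:ℝ) := by exact_mod_cast hx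
    linarith
  have := arith_u ((x:ℝ)+1) hu2
  have hs2 : 1 - (1/(2*((x:ℝ)+1)))^2 = (4*((x:ℝ)+1)^2-1)/(4*((x:ℝ)+1)^2) := by
    field_simp
    ring
  rw [hs2]
  calc 2*(1/(2*((x:ℝ)+1))) + 2*(1/(2*((x:ℝ)+1)))^3/3 +
        2*(1/(2*((x:ℝ)+1)))^5/(5*((4*((x:ℝ)+1)^2-1)/(4*((x:ℝ)+1)^2)))
      ≤ 1/((x:ℝ)+1) + 0.26/(((x:ℝ)+1)*(((x:ℝ)+1)+1)*(((x:ℝ)+1)+2)) := this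
    _ = 1/((x:ℝ)+1) + 0.26/(((x:ℝ)+1)*((x:ℝ)+2)*((x:ℝ)+3)) := by ring_nf


theorem g_function_bounds (lam : ℝ) (hlam : 0 < lam) :
    (0.09 * Real.exp (-lam) - Real.exp (-lam) / lam <
      (∑' x : ℕ, Real.log (((x : ℝ) + 1.5) / ((x : ℝ) + 0.5)) *
          (Real.exp (-lam) * lam ^ x / (Nat.factorial x))) - 1 / lam) ∧
    ((∑' x : ℕ, Real.log (((x : ℝ) + 1.5) / ((x : ℝ) + 0.5)) *
          (Real.exp (-lam) * lam ^ x / (Nat.factorial x))) - 1 / lam <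
      0.06 * Real.exp (-lam) - Real.exp (-lam) / lam + 0.26 / lam ^ 3) := by
  set q := Real.exp (-lam) with hqdef
  have hq : 0 < q := Real.exp_pos _
  have hqe : q * Real.exp lam = 1 := by
    rw [hqdef, ← Real.exp_add]; simp
  set p : ℕ → ℝ := fun x => q * lam ^ x / (Nat.factorial x : ℝ) with hpdef
  have hppos : ∀ x, 0 < p x := fun x => by
    have : (0:ℝ) < (Nat.factorial x : ℝ) := by positivity
    simp only [hpdef]
    positivity
  set L : ℕ → ℝ := fun x => Real.log (((x : ℝ) + 1.5) / ((x : ℝ) + 0.5)) with hLdef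
  have hmain : (∑' x : ℕ, Real.log (((x : ℝ) + 1.5) / ((x : ℝ) + 0.5)) *
      (q * lam ^ x / (Nat.factorial x))) = ∑' x, L x * p x := rfl
  rw [hmain]
  -- summability of the main series
  have hpsum : Summable p := by
    refine ((Real.summable_pow_div_factorial lam).mul_left q).congr fun x => ?_
    simp only [hpdef]
    rw [mul_div_assoc]
  have hterm : Summable (fun x => L x * p x) :=
    Summable.of_nonneg_of_le
      (fun x => mul_nonneg (L_nonneg x) (hppos x).le)
      (fun x => mul_le_mul_of_nonneg_right (L_le_log3 x) (hppos x).le)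
      (hpsum.mul_left (Real.log 3))
  -- the 1/(x+1) series
  have e1 : ∀ x : ℕ, 1/((x:ℝ)+1) * p x = q * (lam^x/(Nat.factorial (x+1) : ℝ)) := by
    intro x
    have hf : ((Nat.factorial (x+1)) : ℝ) = ((x:ℝ)+1) * (Nat.factorial x : ℝ) := by
      rw [Nat.factorial_succ]; push_cast; ring
    have h0 : ((Nat.factorial x) : ℝ) ≠ 0 := by positivity
    have h1 : ((x:ℝ)+1) ≠ 0 := by positivity
    simp only [hpdef]
    rw [hf]
    field_simp
  have h1sum : Summable (fun x : ℕ => 1/((x:ℝ)+1) * p x) :=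
    ((Sk lam hlam 1).mul_left q).congr fun x => (e1 x).symm
  have h1tsum : ∑' x : ℕ, 1/((x:ℝ)+1) * p x = 1/lam - q/lam := by
    rw [tsum_congr e1, tsum_mul_left, T1 lam hlam]
    rw [mul_div_assoc', show q * (Real.exp lam - 1) = 1 - q by rw [mul_sub, hqe]; ring,
      sub_div]
  -- the 1/((x+1)(x+2)(x+3)) series
  have e3 : ∀ x : ℕ, p x / (((x:ℝ)+1)*((x:ℝ)+2)*((x:ℝ)+3))
      = q * (lam^x/(Nat.factorial (x+3) : ℝ)) := by
    intro x
    have hf : ((Nat.factorial (x+3)) : ℝ)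
        = ((x:ℝ)+3) * (((x:ℝ)+2) * (((x:ℝ)+1) * (Nat.factorial x : ℝ))) := by
      rw [show x+3 = x+1+1+1 from rfl, Nat.factorial_succ, Nat.factorial_succ,
        Nat.factorial_succ]
      push_cast; ring
    have h0 : ((Nat.factorial x) : ℝ) ≠ 0 := by positivity
    have h1 : ((x:ℝ)+1) ≠ 0 := by positivity
    have h2 : ((x:ℝ)+2) ≠ 0 := by positivity
    have h3 : ((x:ℝ)+3) ≠ 0 := by positivity
    simp only [hpdef]
    rw [hf]
    field_simp
  have h3sum : Summable (fun x : ℕ => p x / (((x:ℝ)+1)*((x:ℝ)+2)*((x:ℝ)+3))) :=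
    ((Sk lam hlam 3).mul_left q).congr fun x => (e3 x).symm
  have h3tsum : ∑' x : ℕ, p x / (((x:ℝ)+1)*((x:ℝ)+2)*((x:ℝ)+3))
      = (1 - q*(1+lam+lam^2/2))/lam^3 := by
    rw [tsum_congr e3, tsum_mul_left, T3 lam hlam]
    rw [mul_div_assoc',
      show q * (Real.exp lam - 1 - lam - lam^2/2) = 1 - q*(1+lam+lam^2/2) by
        rw [show Real.exp lam - 1 - lam - lam^2/2
            = Real.exp lam - (1+lam+lam^2/2) by ring, mul_sub, hqe]]
  -- indicator series
  have indsum : ∀ c : ℝ, Summable (fun x : ℕ => if x = 0 then c else 0) := by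
    intro c
    apply summable_of_ne_finset_zero (s := {0})
    intro b hb
    simp only [Finset.mem_singleton] at hb
    simp [hb]
  have indtsum : ∀ c : ℝ, ∑' x : ℕ, (if x = 0 then c else 0) = c := fun c => tsum_ite_eq 0 (fun _ => c)
  -- values at 0
  have hL0 : L 0 = Real.log 3 := by
    simp only [hLdef]; norm_num
  have hp0 : p 0 = q := by simp only [hpdef]; norm_num
  have hL0low := L0_low
  have hL0up := L0_up
  constructor
  · -- lower bound
    set flow : ℕ → ℝ := fun x => 1/((x:ℝ)+1) * p x + (if x = 0 then 0.09*q else 0) with hflow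
    have hflowsum : Summable flow := h1sum.add (indsum _)
    have hlt : ∑' x, flow x < ∑' x, L x * p x := by
      apply Summable.tsum_lt_tsum_of_nonneg (i := 0)
      · intro b
        simp only [hflow]
        have h2 := (hppos b).le
        have h1 : (0:ℝ) ≤ 1/((b:ℝ)+1) := by positivity
        have h3 : (0:ℝ) ≤ (if b = 0 then 0.09*q else 0) := by
          split
          · nlinarith
          · exact le_rfl
        exact add_nonneg (mul_nonneg h1 h2) h3
      · intro b
        simp only [hflow]
        match b with
        | 0 =>
          simp only [if_pos rfl, hp0, hL0]
          norm_num
          nlinarith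
        | (k+1) =>
          simp only [if_neg (Nat.succ_ne_zero k), add_zero]
          exact mul_le_mul_of_nonneg_right (L_lower (k+1)) (hppos (k+1)).le
      · simp only [hflow, if_pos rfl, hp0, hL0]
        norm_num
        nlinarith
      · exact hterm
    have hval : ∑' x, flow x = (1/lam - q/lam) + 0.09*q := by
      simp only [hflow]
      rw [Summable.tsum_add h1sum (indsum _), h1tsum, indtsum]
    rw [hval] at hlt
    linarith
  · -- upper bound
    set K : ℝ := Real.log 3 - 1 - 13/300 with hK
    set fup : ℕ → ℝ := fun x => 1/((x:ℝ)+1) * p x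
      + 0.26 * (p x / (((x:ℝ)+1)*((x:ℝ)+2)*((x:ℝ)+3)))
      + (if x = 0 then K*q else 0) with hfup
    have hfupsum : Summable fup := (h1sum.add (h3sum.mul_left 0.26)).add (indsum _)
    have hle : ∑' x, L x * p x ≤ ∑' x, fup x := by
      apply Summable.tsum_le_tsum _ hterm hfupsum
      intro b
      simp only [hfup]
      match b with
      | 0 =>
        simp only [if_pos rfl, hp0, hL0, hK]
        norm_num
        nlinarith
      | (k+1) =>
        simp only [if_neg (Nat.succ_ne_zero k), add_zero]
        have hb := L_upper (k+1) (Nat.le_add_left 1 k)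
        have hpk := (hppos (k+1)).le
        have hmul := mul_le_mul_of_nonneg_right hb hpk
        refine le_trans hmul (le_of_eq ?_)
        ring
    have hval : ∑' x, fup x = (1/lam - q/lam)
        + 0.26 * ((1 - q*(1+lam+lam^2/2))/lam^3) + K*q := by
      simp only [hfup]
      rw [Summable.tsum_add (h1sum.add (h3sum.mul_left 0.26)) (indsum _),
        Summable.tsum_add h1sum (h3sum.mul_left 0.26), h1tsum, tsum_mul_left, h3tsum, indtsum]
    rw [hval] at hle
    have hpos : 0 < q*(1+lam+lam^2/2)/lam^3 := by positivity
    have hKlt : K < 0.06 := by rw [hK]; linarith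
    have hexp : 0.26 * ((1 - q*(1+lam+lam^2/2))/lam^3)
        = 0.26/lam^3 - 0.26*(q*(1+lam+lam^2/2)/lam^3) := by
      field_simp
    rw [hexp] at hle
    nlinarith
end
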